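/- arXiv:1906.01013 — 7 statements merged into one kernel-verified Lean document; each statement's English description precedes it below -/
import Mathlib

section
/- Let X be a Köthe sequence space and let Ω be a centralizer on X which is boundedly equivalent to Ω₁ + iΩ₂, where Ω₁ and Ω₂ are real centralizers on X. Then Ω is projectively equivalent to a real centralizer on X if and only if (1) Ω₁ is trivial, or (2) Ω₂ is trivial, or (3) Ω₁ and Ω₂ are projectively equivalent. -/
open scoped ENNReal

noncomputable section

/-- A Köthe sequence space in the sense of Kalton: a linear subspace of `ℂ^ℕ` with a
complete norm whose unit ball is closed in the product topology, which is solid, and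
which sits between a weighted `ℓ₁` space and a weighted `ℓ∞` space (the norm being
interpreted as `∞` outside the space). -/
structure KotheSequenceSpace where
  /-- membership in the space -/
  Mem : (ℕ → ℂ) → Prop
  /-- the norm (only meaningful on members) -/
  nrm : (ℕ → ℂ) → ℝ
  zero_mem : Mem 0
  add_mem : ∀ x y, Mem x → Mem y → Mem (x + y)
  smul_mem : ∀ (a : ℂ) (x), Mem x → Mem (a • x)
  nrm_nonneg : ∀ x, Mem x → 0 ≤ nrm x
  nrm_eq_zero : ∀ x, Mem x → nrm x = 0 → x = 0
  nrm_add_le : ∀ x y, Mem x → Mem y → nrm (x + y) ≤ nrm x + nrm y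
  nrm_smul : ∀ (a : ℂ) (x), Mem x → nrm (a • x) = ‖a‖ * nrm x
  /-- completeness: every Cauchy sequence in the space converges in norm to a member -/
  complete : ∀ f : ℕ → (ℕ → ℂ), (∀ n, Mem (f n)) →
    (∀ ε : ℝ, 0 < ε → ∃ N : ℕ, ∀ m, N ≤ m → ∀ n, N ≤ n → nrm (f m - f n) < ε) →
    ∃ g, Mem g ∧ ∀ ε : ℝ, 0 < ε → ∃ N : ℕ, ∀ n, N ≤ n → nrm (f n - g) < ε
  /-- the closed unit ball is closed in the product topology of `ℂ^ℕ` -/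
  isClosed_ball : IsClosed {x : ℕ → ℂ | Mem x ∧ nrm x ≤ 1}
  /-- solidity: if `y` is in the space and `|x| ≤ |y|` pointwise then `x` is in the
  space with `‖x‖ ≤ ‖y‖` -/
  solid : ∀ x y, Mem y → (∀ n, ‖x n‖ ≤ ‖y n‖) →
    Mem x ∧ nrm x ≤ nrm y
  /-- there is a strictly positive weight `h` with `∑ |x n| h n ≤ ‖x‖` -/
  lower : ∃ h : ℕ → ℝ, (∀ n, 0 < h n) ∧ ∀ x, Mem x →
    (∑' n, ENNReal.ofReal (‖x n‖ * h n)) ≤ ENNReal.ofReal (nrm x)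
  /-- there is a strictly positive weight `k` with `‖x‖ ≤ sup_n |x n| k n` for every
  `x ∈ ℂ^ℕ` (with the convention `‖x‖ = ∞` outside the space) -/
  upper : ∃ k : ℕ → ℝ, (∀ n, 0 < k n) ∧ ∀ (x : ℕ → ℂ) (M : ℝ),
    (∀ n, ‖x n‖ * k n ≤ M) → Mem x ∧ nrm x ≤ M

/-- A centralizer on a Köthe sequence space `X`: a homogeneous map `Ω : X → ℂ^ℕ` such
that `‖Ω(ux) - uΩ(x)‖_X ≤ C ‖u‖_∞ ‖x‖_X` for all `x ∈ X` and bounded `u`. -/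
def IsCentralizer (X : KotheSequenceSpace) (Ω : (ℕ → ℂ) → (ℕ → ℂ)) : Prop :=
  (∀ (a : ℂ) (x : ℕ → ℂ), X.Mem x → Ω (a • x) = a • Ω x) ∧
  ∃ C : ℝ, 0 < C ∧ ∀ (x u : ℕ → ℂ) (M : ℝ), X.Mem x → 0 ≤ M →
    (∀ n, ‖u n‖ ≤ M) →
    X.Mem (Ω (u * x) - u * Ω x) ∧ X.nrm (Ω (u * x) - u * Ω x) ≤ C * M * X.nrm x

/-- A real centralizer: a centralizer sending real sequences to real sequences. -/
def IsRealCentralizer (X : KotheSequenceSpace) (Ω : (ℕ → ℂ) → (ℕ → ℂ)) : Prop :=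
  IsCentralizer X Ω ∧ ∀ x, X.Mem x → (∀ n, (x n).im = 0) → ∀ n, (Ω x n).im = 0

/-- A map `f : X → ℂ^ℕ` is bounded if `f x ∈ X` with `‖f x‖_X ≤ C ‖x‖_X` on `X`. -/
def IsBoundedMap (X : KotheSequenceSpace) (f : (ℕ → ℂ) → (ℕ → ℂ)) : Prop :=
  ∃ C : ℝ, 0 < C ∧ ∀ x, X.Mem x → X.Mem (f x) ∧ X.nrm (f x) ≤ C * X.nrm x

/-- Two centralizers are equivalent if their difference is a linear map plus a bounded
map. -/
def AreEquivalent (X : KotheSequenceSpace) (Ω Ψ : (ℕ → ℂ) → (ℕ → ℂ)) : Prop :=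
  ∃ L : (ℕ → ℂ) → (ℕ → ℂ),
    (∀ x y, X.Mem x → X.Mem y → L (x + y) = L x + L y) ∧
    (∀ (a : ℂ) (x), X.Mem x → L (a • x) = a • L x) ∧
    IsBoundedMap X (fun x => Ω x - Ψ x - L x)

/-- Boundedly equivalent: the difference itself is bounded. -/
def BoundedlyEquivalent (X : KotheSequenceSpace) (Ω Ψ : (ℕ → ℂ) → (ℕ → ℂ)) : Prop :=
  IsBoundedMap X (fun x => Ω x - Ψ x)

/-- Projectively equivalent: `Ω` is equivalent to `λΨ` for some `λ ≠ 0`. -/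
def ProjectivelyEquivalent (X : KotheSequenceSpace) (Ω Ψ : (ℕ → ℂ) → (ℕ → ℂ)) : Prop :=
  ∃ lam : ℂ, lam ≠ 0 ∧ AreEquivalent X Ω (fun x => lam • Ψ x)

/-- A centralizer is trivial if it is equivalent to `0`. -/
def IsTrivialCentralizer (X : KotheSequenceSpace) (Ω : (ℕ → ℂ) → (ℕ → ℂ)) : Prop :=
  AreEquivalent X Ω (fun _ => 0)

section Aux

/-- pointwise complex conjugation of a sequence -/
def cgs (x : ℕ → ℂ) : ℕ → ℂ := fun n => (starRingEnd ℂ) (x n)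

lemma cgs_cgs (x : ℕ → ℂ) : cgs (cgs x) = x := by
  funext n; simp [cgs]

lemma cgs_abs (x : ℕ → ℂ) (n : ℕ) : ‖cgs x n‖ = ‖x n‖ := by
  simp [cgs]

lemma cgs_add (x y : ℕ → ℂ) : cgs (x + y) = cgs x + cgs y := by
  funext n; simp [cgs]

lemma cgs_smul (a : ℂ) (x : ℕ → ℂ) : cgs (a • x) = (starRingEnd ℂ) a • cgs x := by
  funext n; simp [cgs]

variable (X : KotheSequenceSpace)

lemma nrm_zero : X.nrm 0 = 0 := by
  have h := X.nrm_smul 0 0 X.zero_mem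
  simpa using h

lemma mem_sub {x y : ℕ → ℂ} (hx : X.Mem x) (hy : X.Mem y) : X.Mem (x - y) := by
  have h := X.add_mem x ((-1 : ℂ) • y) hx (X.smul_mem _ _ hy)
  simpa [sub_eq_add_neg, neg_one_smul] using h

lemma nrm_neg (y : ℕ → ℂ) (hy : X.Mem y) : X.nrm (-y) = X.nrm y := by
  have h := X.nrm_smul (-1) y hy
  simpa [neg_one_smul] using h

lemma nrm_sub_le (x y : ℕ → ℂ) (hx : X.Mem x) (hy : X.Mem y) :
    X.nrm (x - y) ≤ X.nrm x + X.nrm y := by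
  have hmy : X.Mem (-y) := by simpa [neg_one_smul] using X.smul_mem (-1) y hy
  have h := X.nrm_add_le x (-y) hx hmy
  rw [nrm_neg X y hy] at h
  simpa [sub_eq_add_neg] using h

lemma mem_cgs {x : ℕ → ℂ} (hx : X.Mem x) : X.Mem (cgs x) :=
  (X.solid (cgs x) x hx (fun n => le_of_eq (cgs_abs x n))).1

lemma nrm_cgs {x : ℕ → ℂ} (hx : X.Mem x) : X.nrm (cgs x) = X.nrm x := by
  have h1 := (X.solid (cgs x) x hx (fun n => le_of_eq (cgs_abs x n))).2
  have h2 := (X.solid (cgs (cgs x)) (cgs x) (mem_cgs X hx)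
    (fun n => le_of_eq (cgs_abs _ n))).2
  rw [cgs_cgs] at h2
  exact le_antisymm h1 h2

lemma bdd_congr {f g : (ℕ → ℂ) → (ℕ → ℂ)} (h : ∀ x, X.Mem x → f x = g x)
    (hf : IsBoundedMap X f) : IsBoundedMap X g := by
  obtain ⟨C, hC, hb⟩ := hf
  exact ⟨C, hC, fun x hx => h x hx ▸ hb x hx⟩

lemma bdd_add {f g : (ℕ → ℂ) → (ℕ → ℂ)} (hf : IsBoundedMap X f)
    (hg : IsBoundedMap X g) : IsBoundedMap X (fun x => f x + g x) := by
  obtain ⟨C, hC, hb⟩ := hf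
  obtain ⟨D, hD, hd⟩ := hg
  refine ⟨C + D, by linarith, fun x hx => ?_⟩
  have h1 := hb x hx
  have h2 := hd x hx
  refine ⟨X.add_mem _ _ h1.1 h2.1, ?_⟩
  have h3 := X.nrm_add_le _ _ h1.1 h2.1
  have := h1.2; have := h2.2
  linarith

lemma bdd_smul (c : ℂ) {f : (ℕ → ℂ) → (ℕ → ℂ)} (hf : IsBoundedMap X f) :
    IsBoundedMap X (fun x => c • f x) := by
  obtain ⟨C, hC, hb⟩ := hf
  refine ⟨(‖c‖ + 1) * C, by positivity, fun x hx => ?_⟩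
  have h1 := hb x hx
  refine ⟨X.smul_mem c _ h1.1, ?_⟩
  have habs : (0:ℝ) ≤ ‖c‖ := norm_nonneg c
  have hfx := X.nrm_nonneg _ h1.1
  have hxx := X.nrm_nonneg x hx
  have h2 : ‖c‖ * X.nrm (f x) ≤ ‖c‖ * (C * X.nrm x) :=
    mul_le_mul_of_nonneg_left h1.2 habs
  rw [X.nrm_smul c _ h1.1]
  nlinarith

lemma bdd_sub {f g : (ℕ → ℂ) → (ℕ → ℂ)} (hf : IsBoundedMap X f)
    (hg : IsBoundedMap X g) : IsBoundedMap X (fun x => f x - g x) := by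
  refine bdd_congr X (fun x _ => ?_) (bdd_add X hf (bdd_smul X (-1) hg))
  rw [neg_one_smul, ← sub_eq_add_neg]

lemma bdd_conj {f : (ℕ → ℂ) → (ℕ → ℂ)} (hf : IsBoundedMap X f) :
    IsBoundedMap X (fun x => cgs (f (cgs x))) := by
  obtain ⟨C, hC, hb⟩ := hf
  refine ⟨C, hC, fun x hx => ?_⟩
  have h1 := hb (cgs x) (mem_cgs X hx)
  refine ⟨mem_cgs X h1.1, ?_⟩
  rw [nrm_cgs X h1.1]
  calc X.nrm (f (cgs x)) ≤ C * X.nrm (cgs x) := h1.2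
    _ = C * X.nrm x := by rw [nrm_cgs X hx]

/-- Key lemma: a real centralizer is boundedly equivalent to its conjugate. -/
lemma real_conj_bdd {Ψ : (ℕ → ℂ) → (ℕ → ℂ)} (hΨ : IsRealCentralizer X Ψ) :
    IsBoundedMap X (fun x => cgs (Ψ (cgs x)) - Ψ x) := by
  obtain ⟨⟨hhom, C, hC, hcen⟩, hreal⟩ := hΨ
  refine ⟨2 * C, by linarith, fun x hx => ?_⟩
  classical
  set u : ℕ → ℂ := fun n => if x n = 0 then 1 else x n / (‖x n‖ : ℂ) with hu
  set ax : ℕ → ℂ := fun n => (‖x n‖ : ℂ) with hax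
  have hu1 : ∀ n, ‖u n‖ ≤ 1 := by
    intro n
    by_cases h : x n = 0
    · simp [hu, h]
    · have h0 : ‖x n‖ ≠ 0 := by
        simpa using h
      simp [hu, h, norm_div, div_self h0]
  have haxmem : X.Mem ax ∧ X.nrm ax ≤ X.nrm x :=
    X.solid ax x hx (fun n => by
      simp [hax])
  have hxuax : x = u * ax := by
    funext n
    by_cases h : x n = 0
    · simp [hu, hax, h]
    · have h0 : (‖x n‖ : ℂ) ≠ 0 := by
        simpa using h
      simp only [Pi.mul_apply, hu, hax, if_neg h]
      field_simp
  have hcgx : cgs x = cgs u * ax := by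
    funext n
    have hxn : x n = u n * ax n := congrFun hxuax n
    simp only [cgs, Pi.mul_apply, hxn, map_mul]
    congr 1
    simp [hax, Complex.conj_ofReal]
  have hD2 := hcen ax u 1 haxmem.1 zero_le_one hu1
  have hcu1 : ∀ n, ‖cgs u n‖ ≤ 1 := fun n => by
    rw [cgs_abs]; exact hu1 n
  have hD1 := hcen ax (cgs u) 1 haxmem.1 zero_le_one hcu1
  have hΨax : ∀ n, (Ψ ax n).im = 0 :=
    hreal ax haxmem.1 (fun n => by simp [hax])
  have key : cgs (Ψ (cgs x)) - Ψ x =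
      cgs (Ψ (cgs u * ax) - cgs u * Ψ ax) - (Ψ (u * ax) - u * Ψ ax) := by
    have e2 : Ψ x = Ψ (u * ax) := by rw [← hxuax]
    rw [hcgx, e2]
    funext n
    have hconj : (starRingEnd ℂ) (Ψ ax n) = Ψ ax n :=
      Complex.conj_eq_iff_im.mpr (hΨax n)
    simp only [cgs, Pi.sub_apply, Pi.mul_apply, map_sub, map_mul,
      Complex.conj_conj, hconj]
    ring
  have hmem1 := mem_cgs X hD1.1
  have hnrm1 : X.nrm (cgs (Ψ (cgs u * ax) - cgs u * Ψ ax)) ≤ C * X.nrm x := by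
    rw [nrm_cgs X hD1.1]
    calc X.nrm (Ψ (cgs u * ax) - cgs u * Ψ ax) ≤ C * 1 * X.nrm ax := hD1.2
      _ = C * X.nrm ax := by ring
      _ ≤ C * X.nrm x := by
          exact mul_le_mul_of_nonneg_left haxmem.2 (le_of_lt hC)
  have hnrm2 : X.nrm (Ψ (u * ax) - u * Ψ ax) ≤ C * X.nrm x := by
    calc X.nrm (Ψ (u * ax) - u * Ψ ax) ≤ C * 1 * X.nrm ax := hD2.2
      _ = C * X.nrm ax := by ring
      _ ≤ C * X.nrm x := mul_le_mul_of_nonneg_left haxmem.2 (le_of_lt hC)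
  constructor
  · show X.Mem (cgs (Ψ (cgs x)) - Ψ x)
    rw [key]
    exact mem_sub X hmem1 hD2.1
  · show X.nrm (cgs (Ψ (cgs x)) - Ψ x) ≤ 2 * C * X.nrm x
    rw [key]
    have := nrm_sub_le X _ _ hmem1 hD2.1
    linarith

end Aux
set_option maxRecDepth 8000

/-- Lemma 3.1 of the paper: a centralizer boundedly equivalent to `Ω₁ + iΩ₂` with
`Ω₁, Ω₂` real centralizers is projectively equivalent to a real centralizer iff `Ω₁`
is trivial, or `Ω₂` is trivial, or `Ω₁` and `Ω₂` are projectively equivalent. -/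
theorem statement0 (X : KotheSequenceSpace) (Ω Ω₁ Ω₂ : (ℕ → ℂ) → (ℕ → ℂ))
    (hΩ : IsCentralizer X Ω) (h1 : IsRealCentralizer X Ω₁) (h2 : IsRealCentralizer X Ω₂)
    (hbe : BoundedlyEquivalent X Ω (fun x => Ω₁ x + Complex.I • Ω₂ x)) :
    (∃ Ψ, IsRealCentralizer X Ψ ∧ ProjectivelyEquivalent X Ω Ψ) ↔
      (IsTrivialCentralizer X Ω₁ ∨ IsTrivialCentralizer X Ω₂ ∨
        ProjectivelyEquivalent X Ω₁ Ω₂) := by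
  constructor
  · rintro ⟨Ψ, hΨreal, lam, hlam, L, hLadd, hLsmul, hLbdd⟩
    -- F x = Ω₁ x + I•Ω₂ x - lam•Ψ x - L x is bounded
    have hF : IsBoundedMap X
        (fun x => Ω₁ x + Complex.I • Ω₂ x - lam • Ψ x - L x) := by
      refine bdd_congr X (fun x _ => ?_)
        (bdd_add X (bdd_smul X (-1) hbe) hLbdd)
      simp only [neg_one_smul]
      abel
    set L' : (ℕ → ℂ) → (ℕ → ℂ) := fun x => cgs (L (cgs x)) with hL'def
    have hL'add : ∀ x y, X.Mem x → X.Mem y → L' (x + y) = L' x + L' y := by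
      intro x y hx hy
      simp only [hL'def, cgs_add]
      rw [hLadd _ _ (mem_cgs X hx) (mem_cgs X hy), cgs_add]
    have hL'smul : ∀ (a : ℂ) (x), X.Mem x → L' (a • x) = a • L' x := by
      intro a x hx
      simp only [hL'def, cgs_smul]
      rw [hLsmul _ _ (mem_cgs X hx), cgs_smul, Complex.conj_conj]
    have hB1 := real_conj_bdd X h1
    have hB2 := real_conj_bdd X h2
    have hB3 := real_conj_bdd X hΨreal
    have hG := bdd_conj X hF
    -- H x = Ω₁ x - I•Ω₂ x - conj(lam)•Ψ x - L' x is bounded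
    have hH : IsBoundedMap X (fun x =>
        Ω₁ x - Complex.I • Ω₂ x - (starRingEnd ℂ) lam • Ψ x - L' x) := by
      refine bdd_congr X (fun x hx => ?_)
        (bdd_add X (bdd_add X (bdd_sub X hG hB1)
          (bdd_smul X Complex.I hB2)) (bdd_smul X ((starRingEnd ℂ) lam) hB3))
      funext n
      simp only [hL'def, cgs, Pi.sub_apply, Pi.add_apply, Pi.smul_apply,
        smul_eq_mul, map_sub, map_add, map_mul, Complex.conj_I]
      ring
    set a : ℂ := (lam + (starRingEnd ℂ) lam) / 2 with ha
    set b : ℂ := (lam - (starRingEnd ℂ) lam) / (2 * Complex.I) with hbdef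
    set Lp : (ℕ → ℂ) → (ℕ → ℂ) := fun x => (2 : ℂ)⁻¹ • (L x + L' x) with hLp
    set Lm : (ℕ → ℂ) → (ℕ → ℂ) :=
      fun x => (2 * Complex.I)⁻¹ • (L x - L' x) with hLm
    have hP1 : IsBoundedMap X (fun x => Ω₁ x - a • Ψ x - Lp x) := by
      refine bdd_congr X (fun x hx => ?_)
        (bdd_smul X (2 : ℂ)⁻¹ (bdd_add X hF hH))
      funext n
      simp only [hLp, ha, Pi.sub_apply, Pi.add_apply, Pi.smul_apply, smul_eq_mul]
      field_simp
      ring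
    have hP2 : IsBoundedMap X (fun x => Ω₂ x - b • Ψ x - Lm x) := by
      refine bdd_congr X (fun x hx => ?_)
        (bdd_smul X (2 * Complex.I)⁻¹ (bdd_sub X hF hH))
      funext n
      simp only [hLm, hbdef, Pi.sub_apply, Pi.add_apply, Pi.smul_apply, smul_eq_mul]
      have hI : (2 * Complex.I) ≠ 0 := by
        simp [Complex.I_ne_zero]
      field_simp
      ring
    have hLpadd : ∀ x y, X.Mem x → X.Mem y → Lp (x + y) = Lp x + Lp y := by
      intro x y hx hy
      simp only [hLp, hLadd x y hx hy, hL'add x y hx hy, smul_add]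
      abel
    have hLpsmul : ∀ (c : ℂ) (x), X.Mem x → Lp (c • x) = c • Lp x := by
      intro c x hx
      simp only [hLp]
      rw [hLsmul c x hx, hL'smul c x hx, ← smul_add, smul_comm]
    have hLmadd : ∀ x y, X.Mem x → X.Mem y → Lm (x + y) = Lm x + Lm y := by
      intro x y hx hy
      simp only [hLm, hLadd x y hx hy, hL'add x y hx hy, ← smul_add]
      congr 1
      abel
    have hLmsmul : ∀ (c : ℂ) (x), X.Mem x → Lm (c • x) = c • Lm x := by
      intro c x hx
      simp only [hLm]
      rw [hLsmul c x hx, hL'smul c x hx, ← smul_sub, smul_comm]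
    by_cases hbz : b = 0
    · right; left
      refine ⟨Lm, hLmadd, hLmsmul, bdd_congr X (fun x hx => ?_) hP2⟩
      simp [hbz]
    · by_cases haz : a = 0
      · left
        refine ⟨Lp, hLpadd, hLpsmul, bdd_congr X (fun x hx => ?_) hP1⟩
        simp [haz]
      · right; right
        refine ⟨a / b, div_ne_zero haz hbz,
          fun x => Lp x - (a / b) • Lm x, ?_, ?_, ?_⟩
        · intro x y hx hy
          simp only [hLpadd x y hx hy, hLmadd x y hx hy, smul_add]
          abel
        · intro c x hx
          simp only [hLpsmul c x hx, hLmsmul c x hx, smul_sub, smul_comm c (a / b)]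
        · refine bdd_congr X (fun x hx => ?_)
            (bdd_sub X hP1 (bdd_smul X (a / b) hP2))
          funext n
          simp only [Pi.sub_apply, Pi.smul_apply, smul_eq_mul]
          field_simp
          ring
  · rintro (⟨L₁, hadd, hsmul, hbd⟩ | ⟨L₂, hadd, hsmul, hbd⟩ |
      ⟨μ, hμ, L₃, hadd, hsmul, hbd⟩)
    · -- Ω₁ trivial : take Ψ = Ω₂, lam = I
      refine ⟨Ω₂, h2, Complex.I, Complex.I_ne_zero, L₁, hadd, hsmul, ?_⟩
      refine bdd_congr X (fun x hx => ?_) (bdd_add X hbe hbd)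
      funext n
      simp only [Pi.sub_apply, Pi.add_apply, Pi.smul_apply, Pi.zero_apply,
        smul_eq_mul]
      ring
    · -- Ω₂ trivial : take Ψ = Ω₁, lam = 1
      refine ⟨Ω₁, h1, 1, one_ne_zero, fun x => Complex.I • L₂ x, ?_, ?_, ?_⟩
      · intro x y hx hy
        simp only [hadd x y hx hy, smul_add]
      · intro c x hx
        show Complex.I • L₂ (c • x) = c • (Complex.I • L₂ x)
        rw [hsmul c x hx, smul_comm]
      · refine bdd_congr X (fun x hx => ?_)
          (bdd_add X hbe (bdd_smul X Complex.I hbd))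
        funext n
        simp only [Pi.sub_apply, Pi.add_apply, Pi.smul_apply, Pi.zero_apply,
          smul_eq_mul]
        ring
    · by_cases hμI : μ + Complex.I = 0
      · -- Ω is trivial; take Ψ = 0
        refine ⟨fun _ => 0, ⟨⟨fun c x hx => by simp, 1, one_pos,
          fun x u M hx hM hu => ?_⟩, fun x hx hre n => by simp⟩,
          1, one_ne_zero, L₃, hadd, hsmul, ?_⟩
        · constructor
          · have : (0 : ℕ → ℂ) - u * 0 = 0 := by
              funext n; simp
            rw [this]
            exact X.zero_mem
          · have : (0 : ℕ → ℂ) - u * 0 = 0 := by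
              funext n; simp
            rw [this, nrm_zero X]
            have := X.nrm_nonneg x hx
            nlinarith
        · refine bdd_congr X (fun x hx => ?_) (bdd_add X hbe hbd)
          funext n
          simp only [Pi.sub_apply, Pi.add_apply, Pi.smul_apply, Pi.zero_apply,
            smul_eq_mul, mul_zero]
          linear_combination (-(Ω₂ x n)) * hμI
      · refine ⟨Ω₂, h2, μ + Complex.I, hμI, L₃, hadd, hsmul, ?_⟩
        refine bdd_congr X (fun x hx => ?_) (bdd_add X hbe hbd)
        funext n
        simp only [Pi.sub_apply, Pi.add_apply, Pi.smul_apply, Pi.zero_apply,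
          smul_eq_mul]
        ring
end
end

section
/- Let μ be a probability measure on a measurable space S, let f, g : S → (0,∞) be measurable functions with log f and log g integrable, and let α ∈ [0,1]. Then α·exp(∫_S log f dμ) + (1−α)·exp(∫_S log g dμ) ≤ exp(∫_S log(α f + (1−α) g) dμ). -/
open MeasureTheory

/-- Jensen: `exp (∫ log u) ≤ ∫ u` for a positive integrable `u` with integrable log. -/
lemma exp_integral_log_le {S : Type*} [MeasurableSpace S] (μ : Measure S)
    [IsProbabilityMeasure μ] (u : S → ℝ) (hupos : ∀ s, 0 < u s)
    (hu : Integrable u μ) (hlu : Integrable (fun s => Real.log (u s)) μ) :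
    Real.exp (∫ s, Real.log (u s) ∂μ) ≤ ∫ s, u s ∂μ := by
  have h := convexOn_exp.map_integral_le (f := fun s => Real.log (u s))
    (μ := μ) Real.continuous_exp.continuousOn isClosed_univ
    (Filter.Eventually.of_forall fun _ => Set.mem_univ _) hlu ?_
  · calc Real.exp (∫ s, Real.log (u s) ∂μ) ≤ ∫ s, Real.exp (Real.log (u s)) ∂μ := h
      _ = ∫ s, u s ∂μ := by
        refine integral_congr_ae (Filter.Eventually.of_forall fun s => ?_)
        exact Real.exp_log (hupos s)
  · have : (Real.exp ∘ fun s => Real.log (u s)) = u := by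
      funext s; simp [Function.comp, Real.exp_log (hupos s)]
    rw [this]; exact hu

/-- The geometric-mean functional `f ↦ exp(∫ log f dμ)` is concave (superadditive for
convex combinations) on positive functions with integrable logarithm, for a probability
measure `μ`. -/
theorem statement1 {S : Type*} [MeasurableSpace S] (μ : Measure S)
    [IsProbabilityMeasure μ] (f g : S → ℝ) (hf : Measurable f) (hg : Measurable g)
    (hfpos : ∀ s, 0 < f s) (hgpos : ∀ s, 0 < g s)
    (hlf : Integrable (fun s => Real.log (f s)) μ)
    (hlg : Integrable (fun s => Real.log (g s)) μ)
    (α : ℝ) (hα : α ∈ Set.Icc (0 : ℝ) 1) :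
    α * Real.exp (∫ s, Real.log (f s) ∂μ) + (1 - α) * Real.exp (∫ s, Real.log (g s) ∂μ)
      ≤ Real.exp (∫ s, Real.log (α * f s + (1 - α) * g s) ∂μ) := by
  obtain ⟨hα0, hα1⟩ := hα
  rcases eq_or_lt_of_le hα0 with h0 | h0
  · simp [← h0]
  rcases eq_or_lt_of_le hα1 with h1 | h1
  · simp [h1]
  have hα1' : 0 < 1 - α := by linarith
  set h : S → ℝ := fun s => α * f s + (1 - α) * g s with hh
  have hhpos : ∀ s, 0 < h s := fun s =>
    add_pos (mul_pos h0 (hfpos s)) (mul_pos hα1' (hgpos s))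
  have hhm : Measurable h := (hf.const_mul α).add (hg.const_mul (1 - α))
  -- integrability of log h
  have hlh : Integrable (fun s => Real.log (h s)) μ := by
    refine Integrable.mono' ((hlf.abs.add hlg.abs).add (integrable_const (|Real.log α|)))
      ((Real.measurable_log.comp hhm).aestronglyMeasurable)
      (Filter.Eventually.of_forall fun s => ?_)
    have hfs := hfpos s; have hgs := hgpos s; have hhs := hhpos s
    rw [Real.norm_eq_abs, abs_le]
    constructor
    · have h1 : Real.log α + Real.log (f s) ≤ Real.log (h s) := by
        rw [← Real.log_mul (ne_of_gt h0) (ne_of_gt hfs)]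
        apply Real.log_le_log (mul_pos h0 hfs)
        have hhe : h s = α * f s + (1 - α) * g s := rfl
        nlinarith [mul_pos hα1' hgs]
      have : -|Real.log α| ≤ Real.log α := neg_abs_le _
      have : -|Real.log (f s)| ≤ Real.log (f s) := neg_abs_le _
      simp only [Pi.add_apply]
      nlinarith [neg_abs_le (Real.log α), neg_abs_le (Real.log (f s)),
        abs_nonneg (Real.log (g s))]
    · have h2 : Real.log (h s) ≤ max (Real.log (f s)) (Real.log (g s)) := by
        have hhe : h s = α * f s + (1 - α) * g s := rfl
        rcases le_total (f s) (g s) with hc | hc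
        · refine le_max_of_le_right (Real.log_le_log hhs ?_)
          nlinarith
        · refine le_max_of_le_left (Real.log_le_log hhs ?_)
          nlinarith
      simp only [Pi.add_apply]
      have := max_le_add_of_nonneg (abs_nonneg (Real.log (f s))) (abs_nonneg (Real.log (g s)))
      calc Real.log (h s) ≤ max (Real.log (f s)) (Real.log (g s)) := h2
        _ ≤ |Real.log (f s)| + |Real.log (g s)| :=
            max_le ((le_abs_self _).trans (by linarith [abs_nonneg (Real.log (g s))]))
              ((le_abs_self _).trans (by linarith [abs_nonneg (Real.log (f s))]))
        _ ≤ |Real.log (f s)| + |Real.log (g s)| + |Real.log α| := by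
            linarith [abs_nonneg (Real.log α)]
  -- integrability of f/h and g/h
  have hfh : Integrable (fun s => f s / h s) μ := by
    refine Integrable.mono' (integrable_const α⁻¹)
      ((hf.div hhm).aestronglyMeasurable) (Filter.Eventually.of_forall fun s => ?_)
    rw [Real.norm_eq_abs, abs_of_nonneg (div_nonneg (hfpos s).le (hhpos s).le)]
    rw [div_le_iff₀ (hhpos s)]
    have : α * f s ≤ h s := by have := mul_pos hα1' (hgpos s); simp only [hh]; nlinarith
    rw [inv_mul_eq_div, le_div_iff₀ h0]
    nlinarith
  have hgh : Integrable (fun s => g s / h s) μ := by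
    refine Integrable.mono' (integrable_const (1 - α)⁻¹)
      ((hg.div hhm).aestronglyMeasurable) (Filter.Eventually.of_forall fun s => ?_)
    rw [Real.norm_eq_abs, abs_of_nonneg (div_nonneg (hgpos s).le (hhpos s).le)]
    rw [div_le_iff₀ (hhpos s)]
    have : (1 - α) * g s ≤ h s := by have := mul_pos h0 (hfpos s); simp only [hh]; nlinarith
    rw [inv_mul_eq_div, le_div_iff₀ hα1']
    nlinarith
  have hlfh : Integrable (fun s => Real.log (f s / h s)) μ := by
    have : (fun s => Real.log (f s / h s)) =
        fun s => Real.log (f s) - Real.log (h s) := by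
      funext s; exact Real.log_div (ne_of_gt (hfpos s)) (ne_of_gt (hhpos s))
    rw [this]; exact hlf.sub hlh
  have hlgh : Integrable (fun s => Real.log (g s / h s)) μ := by
    have : (fun s => Real.log (g s / h s)) =
        fun s => Real.log (g s) - Real.log (h s) := by
      funext s; exact Real.log_div (ne_of_gt (hgpos s)) (ne_of_gt (hhpos s))
    rw [this]; exact hlg.sub hlh
  -- Jensen applications
  have J1 := exp_integral_log_le μ (fun s => f s / h s)
    (fun s => div_pos (hfpos s) (hhpos s)) hfh hlfh
  have J2 := exp_integral_log_le μ (fun s => g s / h s)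
    (fun s => div_pos (hgpos s) (hhpos s)) hgh hlgh
  have hintf : ∫ s, Real.log (f s / h s) ∂μ =
      (∫ s, Real.log (f s) ∂μ) - ∫ s, Real.log (h s) ∂μ := by
    rw [← integral_sub hlf hlh]
    refine integral_congr_ae (Filter.Eventually.of_forall fun s => ?_)
    exact Real.log_div (ne_of_gt (hfpos s)) (ne_of_gt (hhpos s))
  have hintg : ∫ s, Real.log (g s / h s) ∂μ =
      (∫ s, Real.log (g s) ∂μ) - ∫ s, Real.log (h s) ∂μ := by
    rw [← integral_sub hlg hlh]
    refine integral_congr_ae (Filter.Eventually.of_forall fun s => ?_)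
    exact Real.log_div (ne_of_gt (hgpos s)) (ne_of_gt (hhpos s))
  have hsum : α * (∫ s, f s / h s ∂μ) + (1 - α) * (∫ s, g s / h s ∂μ) = 1 := by
    rw [← integral_const_mul, ← integral_const_mul, ← integral_add (hfh.const_mul α)
      (hgh.const_mul (1 - α))]
    have : ∀ s, α * (f s / h s) + (1 - α) * (g s / h s) = 1 := fun s => by
      rw [mul_div_assoc', mul_div_assoc', ← add_div, div_eq_one_iff_eq (ne_of_gt (hhpos s))]
    rw [integral_congr_ae (Filter.Eventually.of_forall fun s => this s)]
    simp
  set A := ∫ s, Real.log (f s) ∂μ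
  set B := ∫ s, Real.log (g s) ∂μ
  set C := ∫ s, Real.log (h s) ∂μ
  rw [hintf] at J1
  rw [hintg] at J2
  have key : α * Real.exp (A - C) + (1 - α) * Real.exp (B - C) ≤ 1 := by
    calc α * Real.exp (A - C) + (1 - α) * Real.exp (B - C)
        ≤ α * (∫ s, f s / h s ∂μ) + (1 - α) * (∫ s, g s / h s ∂μ) := by
          gcongr
      _ = 1 := hsum
  have hexpC : 0 < Real.exp C := Real.exp_pos C
  have expand : α * Real.exp A + (1 - α) * Real.exp B =
      (α * Real.exp (A - C) + (1 - α) * Real.exp (B - C)) * Real.exp C := by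
    rw [add_mul, mul_assoc, mul_assoc, ← Real.exp_add, ← Real.exp_add]
    ring_nf
  rw [expand]
  calc (α * Real.exp (A - C) + (1 - α) * Real.exp (B - C)) * Real.exp C
      ≤ 1 * Real.exp C := by gcongr
    _ = Real.exp C := one_mul _
end

section
/- Let {φ_w}_{w∈𝕋} be a family of nondegenerate Orlicz functions such that w ↦ φ_w(t) is Borel for every t ≥ 0, and suppose there is t₀ > 0 such that for every t ∈ (0,t₀) the function w ↦ log φ_w^{-1}(t) is integrable on 𝕋 (with respect to normalized Haar measure). Fix z = re^{iθ} in the open unit disk and define I_z(t) = exp((1/2π)∫_{−π}^{π} P(r, θ−s) · log φ_{e^{is}}^{-1}(t) ds) for t ≥ 0, with the conventions log 0 = −∞ and exp(−∞) = 0. Then (1) I_z(0) = 0, and (2) there exists t' with 0 < t' ≤ t₀ such that I_z is concave and strictly increasing on [0, t'). -/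
open MeasureTheory Real Set Filter Topology
open scoped ENNReal

set_option maxHeartbeats 1000000

noncomputable section

/-- An Orlicz function: convex, nondecreasing and nonnegative on `[0,∞)`, vanishing at
`0` and tending to `∞` at `∞`. -/
def IsOrliczFunction (φ : ℝ → ℝ) : Prop :=
  ConvexOn ℝ (Set.Ici 0) φ ∧ MonotoneOn φ (Set.Ici 0) ∧ φ 0 = 0 ∧
    (∀ t, 0 ≤ t → 0 ≤ φ t) ∧ Filter.Tendsto φ Filter.atTop Filter.atTop

/-- Nondegenerate: positive for positive arguments. -/
def IsNondegenerate (φ : ℝ → ℝ) : Prop := ∀ t, 0 < t → 0 < φ t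

/-- The generalized inverse `φ⁻¹(s) = sup {t ≥ 0 : φ t ≤ s}`. -/
def ginv (φ : ℝ → ℝ) (s : ℝ) : ℝ := sSup {t : ℝ | 0 ≤ t ∧ φ t ≤ s}

/-- The Poisson kernel `P(r,t) = (1 - r²)/(1 - 2r cos t + r²)`. -/
def poissonKernelRT (r t : ℝ) : ℝ := (1 - r ^ 2) / (1 - 2 * r * Real.cos t + r ^ 2)

variable {r θ : ℝ}

lemma pk_denom_pos (hr0 : 0 ≤ r) (hr1 : r < 1) (t : ℝ) :
    0 < 1 - 2 * r * Real.cos t + r ^ 2 := by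
  nlinarith [Real.cos_le_one t, Real.neg_one_le_cos t, sq_nonneg (1 - r)]

lemma pk_pos (hr0 : 0 ≤ r) (hr1 : r < 1) (t : ℝ) : 0 < poissonKernelRT r t :=
  div_pos (by nlinarith) (pk_denom_pos hr0 hr1 t)

lemma pk_continuous (hr0 : 0 ≤ r) (hr1 : r < 1) : Continuous (poissonKernelRT r) :=
  Continuous.div continuous_const (by continuity) fun t => (pk_denom_pos hr0 hr1 t).ne'

lemma pk_periodic (r : ℝ) : Function.Periodic (poissonKernelRT r) (2 * π) := fun t => by
  simp [poissonKernelRT, Real.cos_add_two_pi]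

lemma pk_hasDerivAt (hr0 : 0 ≤ r) (hr1 : r < 1) {t : ℝ} (ht : t ∈ Set.Ioo (-π) π) :
    HasDerivAt (fun x => 2 * Real.arctan ((1 + r) / (1 - r) * Real.tan (x / 2)))
      (poissonKernelRT r t) t := by
  have hc : 0 < Real.cos (t / 2) :=
    Real.cos_pos_of_mem_Ioo ⟨by linarith [ht.1], by linarith [ht.2]⟩
  set k := (1 + r) / (1 - r) with hk
  have h2 : HasDerivAt (fun x : ℝ => x / 2) (1 / 2) t := (hasDerivAt_id t).div_const 2
  have htan : HasDerivAt (fun x : ℝ => Real.tan (x / 2))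
      (1 / Real.cos (t / 2) ^ 2 * (1 / 2)) t :=
    by have := (Real.hasDerivAt_tan hc.ne').comp t h2; exact this
  have hkt : HasDerivAt (fun x : ℝ => k * Real.tan (x / 2))
      (k * (1 / Real.cos (t / 2) ^ 2 * (1 / 2))) t := htan.const_mul k
  have harc : HasDerivAt (fun x : ℝ => Real.arctan (k * Real.tan (x / 2)))
      (1 / (1 + (k * Real.tan (t / 2)) ^ 2) * (k * (1 / Real.cos (t / 2) ^ 2 * (1 / 2)))) t :=
    (Real.hasDerivAt_arctan _).comp t hkt
  have := harc.const_mul 2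
  refine this.congr_deriv (Eq.symm ?_)
  have hr : (1 : ℝ) - r ≠ 0 := by linarith
  have hcost : Real.cos t = 2 * Real.cos (t / 2) ^ 2 - 1 := by
    have h := Real.cos_two_mul (t / 2)
    rwa [show 2 * (t / 2) = t by ring] at h
  have hsin : Real.sin (t / 2) ^ 2 = 1 - Real.cos (t / 2) ^ 2 := Real.sin_sq (t / 2)
  have hD : 1 - 2 * r * Real.cos t + r ^ 2 ≠ 0 := (pk_denom_pos hr0 hr1 t).ne'
  have h1k : 1 + (k * Real.tan (t / 2)) ^ 2 ≠ 0 := by positivity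
  set c := Real.cos (t / 2) with hcdef
  have hc1 : c ^ 2 ≤ 1 := by
    nlinarith [Real.cos_le_one (t / 2), Real.neg_one_le_cos (t / 2)]
  have hkpos : 0 < k := div_pos (by linarith) (by linarith)
  have htan2 : Real.tan (t / 2) ^ 2 = (1 - c ^ 2) / c ^ 2 := by
    rw [Real.tan_eq_sin_div_cos, div_pow, hsin]
  have hX : (k * Real.tan (t / 2)) ^ 2 = k ^ 2 * (1 - c ^ 2) / c ^ 2 := by
    rw [mul_pow, htan2]; ring
  have hden : 0 < c ^ 2 + k ^ 2 * (1 - c ^ 2) := by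
    have := sq_nonneg k
    nlinarith [hc.ne', sq_nonneg c]
  have hc2 : c ^ 2 ≠ 0 := by positivity
  have key : 2 * (1 / (1 + (k * Real.tan (t / 2)) ^ 2) * (k * (1 / c ^ 2 * (1 / 2))))
      = k / (c ^ 2 + k ^ 2 * (1 - c ^ 2)) := by
    rw [hX]; field_simp
  rw [key, poissonKernelRT, hcost]
  have hd2 : 1 - 2 * r * (2 * c ^ 2 - 1) + r ^ 2 ≠ 0 := by
    rw [← hcost]; exact hD
  rw [div_eq_div_iff hd2 hden.ne']
  rw [hk]
  field_simp
  ring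

lemma pk_intervalIntegrable (hr0 : 0 ≤ r) (hr1 : r < 1) (a b : ℝ) :
    IntervalIntegrable (poissonKernelRT r) volume a b :=
  (pk_continuous hr0 hr1).intervalIntegrable a b

lemma pk_int_sub (hr0 : 0 ≤ r) (hr1 : r < 1) {a : ℝ} (h0 : 0 ≤ a) (hπ : a < π) :
    ∫ t in (-a)..a, poissonKernelRT r t
      = 4 * Real.arctan ((1 + r) / (1 - r) * Real.tan (a / 2)) := by
  have key := intervalIntegral.integral_eq_sub_of_hasDerivAt
    (f := fun x => 2 * Real.arctan ((1 + r) / (1 - r) * Real.tan (x / 2)))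
    (f' := poissonKernelRT r) (a := -a) (b := a)
    (fun x hx => by
      rw [Set.uIcc_of_le (by linarith : -a ≤ a)] at hx
      exact pk_hasDerivAt hr0 hr1 ⟨by linarith [hx.1], by linarith [hx.2]⟩)
    (pk_intervalIntegrable hr0 hr1 _ _)
  rw [key]
  simp only [neg_div, Real.tan_neg, mul_neg, Real.arctan_neg]
  ring

lemma pk_integral (hr0 : 0 ≤ r) (hr1 : r < 1) :
    ∫ t in (-π)..π, poissonKernelRT r t = 2 * π := by
  set F : ℝ → ℝ := fun a => ∫ t in (-a)..a, poissonKernelRT r t with hF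
  have hcont : Continuous F := by
    have h1 : Continuous fun a : ℝ => ∫ t in (0 : ℝ)..a, poissonKernelRT r t :=
      intervalIntegral.continuous_primitive (pk_intervalIntegrable hr0 hr1) 0
    have h2 : ∀ a : ℝ, F a = (∫ t in (0:ℝ)..a, poissonKernelRT r t)
        - ∫ t in (0:ℝ)..(-a), poissonKernelRT r t := by
      intro a
      rw [hF]
      simp only
      rw [← intervalIntegral.integral_add_adjacent_intervals
        (pk_intervalIntegrable hr0 hr1 (-a) 0) (pk_intervalIntegrable hr0 hr1 0 a),
        intervalIntegral.integral_symm 0 (-a)]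
      ring
    simp only [funext h2]
    exact (h1.sub (h1.comp continuous_neg))
  have hlim1 : Tendsto F (𝓝[<] π) (𝓝 (F π)) :=
    (hcont.tendsto π).mono_left nhdsWithin_le_nhds
  have hkpos : 0 < (1 + r) / (1 - r) := div_pos (by linarith) (by linarith)
  have hhalf : Tendsto (fun a : ℝ => a / 2) (𝓝[<] π) (𝓝[<] (π / 2)) := by
    apply tendsto_nhdsWithin_of_tendsto_nhds_of_eventually_within
    · exact (((continuous_id.div_const 2).tendsto π).mono_left nhdsWithin_le_nhds)
    · filter_upwards [self_mem_nhdsWithin] with a (ha : a < π)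
      exact (by linarith : a / 2 < π / 2)
  have htan : Tendsto (fun a : ℝ => Real.tan (a / 2)) (𝓝[<] π) atTop :=
    Real.tendsto_tan_pi_div_two.comp hhalf
  have hmul : Tendsto (fun a : ℝ => (1 + r) / (1 - r) * Real.tan (a / 2)) (𝓝[<] π) atTop :=
    htan.const_mul_atTop hkpos
  have harct : Tendsto (fun a : ℝ => 4 * Real.arctan ((1 + r) / (1 - r) * Real.tan (a / 2)))
      (𝓝[<] π) (𝓝 (2 * π)) := by
    have := (Real.tendsto_arctan_atTop.mono_right nhdsWithin_le_nhds).comp hmul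
    have h4 := this.const_mul (4 : ℝ)
    rw [show (2:ℝ) * π = 4 * (π / 2) by ring]
    exact h4
  have hlim2 : Tendsto F (𝓝[<] π) (𝓝 (2 * π)) := by
    apply harct.congr'
    filter_upwards [self_mem_nhdsWithin, Ioo_mem_nhdsLT Real.pi_pos]
      with a _ (ha : a ∈ Set.Ioo 0 π)
    exact (pk_int_sub hr0 hr1 ha.1.le ha.2).symm
  exact tendsto_nhds_unique hlim1 hlim2

lemma pk_shift_integral (hr0 : 0 ≤ r) (hr1 : r < 1) (θ : ℝ) :
    ∫ s in (-π)..π, poissonKernelRT r (θ - s) = 2 * π := by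
  rw [intervalIntegral.integral_comp_sub_left (poissonKernelRT r) θ]
  have := (pk_periodic r).intervalIntegral_add_eq (θ - π) (-π)
  rw [show θ - π + 2 * π = θ + π by ring, show -π + 2 * π = π by ring] at this
  rw [show θ - -π = θ + π by ring, this, pk_integral hr0 hr1]


variable {φ : ℝ → ℝ}

lemma orlicz_cwa (hO : IsOrliczFunction φ) {p : ℝ} (hp : 0 ≤ p) :
    ContinuousWithinAt φ (Set.Ici 0) p := by
  obtain ⟨hconv, hmono, h0, hnn, htop⟩ := hO
  rcases eq_or_lt_of_le hp with rfl | hp'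
  · rw [ContinuousWithinAt, h0]
    have hub : ∀ x ∈ Set.Icc (0:ℝ) 1, φ x ≤ x * φ 1 := by
      intro x hx
      have h := hconv.2 (Set.mem_Ici.mpr zero_le_one) (Set.mem_Ici.mpr le_rfl)
        hx.1 (by linarith [hx.2]) (by ring : x + (1 - x) = 1)
      simpa [h0, smul_eq_mul] using h
    have h1 : Tendsto (fun x : ℝ => x * φ 1) (𝓝[Set.Ici 0] (0:ℝ)) (𝓝 (0:ℝ)) := by
      have hc : Continuous fun x : ℝ => x * φ 1 := continuous_id.mul continuous_const
      simpa using (hc.tendsto 0).mono_left (nhdsWithin_le_nhds (s := Set.Ici (0:ℝ)))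
    have h2 : Tendsto (fun _ : ℝ => (0:ℝ)) (𝓝[Set.Ici 0] (0:ℝ)) (𝓝 (0:ℝ)) :=
      tendsto_const_nhds
    refine tendsto_of_tendsto_of_tendsto_of_le_of_le' h2 h1 ?_ ?_
    · filter_upwards [self_mem_nhdsWithin] with x (hx : (0:ℝ) ≤ x)
      exact hnn x hx
    · filter_upwards [Icc_mem_nhdsGE one_pos] with x hx
      exact hub x hx
  · have hcont : ContinuousOn φ (Set.Ioi 0) :=
      (hconv.subset Set.Ioi_subset_Ici_self (convex_Ioi 0)).continuousOn isOpen_Ioi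
    exact (hcont p hp').mono_of_mem_nhdsWithin (mem_nhdsWithin_of_mem_nhds (Ioi_mem_nhds hp'))

lemma orlicz_strictMonoOn (hO : IsOrliczFunction φ) (hN : IsNondegenerate φ) :
    StrictMonoOn φ (Set.Ici 0) := by
  obtain ⟨hconv, hmono, h0, hnn, htop⟩ := hO
  intro x hx y hy hxy
  rcases eq_or_lt_of_le (Set.mem_Ici.mp hx) with rfl | hx'
  · rw [h0]; exact hN y hxy
  · have hy' : (0:ℝ) < y := lt_trans hx' hxy
    have ha : 0 ≤ x / y := by positivity
    have hb : 0 ≤ 1 - x / y := by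
      have : x / y < 1 := (div_lt_one hy').mpr hxy
      linarith
    have h := hconv.2 (Set.mem_Ici.mpr hy'.le) (Set.mem_Ici.mpr le_rfl) ha hb (by ring)
    simp only [smul_eq_mul, h0, mul_zero, add_zero] at h
    rw [div_mul_cancel₀ _ hy'.ne'] at h
    calc φ x ≤ x / y * φ y := h
      _ < φ y := by
          have hφy : 0 < φ y := hN y hy'
          have : x / y < 1 := (div_lt_one hy').mpr hxy
          nlinarith

lemma ginv_set_nonempty (hO : IsOrliczFunction φ) {s : ℝ} (hs : 0 ≤ s) :
    {t : ℝ | 0 ≤ t ∧ φ t ≤ s}.Nonempty :=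
  ⟨0, le_rfl, by rw [hO.2.2.1]; exact hs⟩

lemma ginv_set_bddAbove (hO : IsOrliczFunction φ) (s : ℝ) :
    BddAbove {t : ℝ | 0 ≤ t ∧ φ t ≤ s} := by
  obtain ⟨T, hT⟩ := Filter.eventually_atTop.mp (Filter.tendsto_atTop.mp hO.2.2.2.2 (s + 1))
  refine ⟨T, fun x hx => ?_⟩
  by_contra h
  push_neg at h
  have := hT x (le_of_lt h)
  linarith [hx.2]

lemma ginv_nonneg (hO : IsOrliczFunction φ) {s : ℝ} (hs : 0 ≤ s) : 0 ≤ ginv φ s :=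
  le_csSup (ginv_set_bddAbove hO s) ⟨le_rfl, by rw [hO.2.2.1]; exact hs⟩

lemma ginv_pos (hO : IsOrliczFunction φ) {s : ℝ} (hs : 0 < s) : 0 < ginv φ s := by
  have hcwa := orlicz_cwa hO le_rfl
  rw [ContinuousWithinAt, hO.2.2.1] at hcwa
  have hev : ∀ᶠ x in 𝓝[Set.Ici 0] (0:ℝ), φ x < s := hcwa (Iio_mem_nhds hs)
  have hev' : ∀ᶠ x in 𝓝[Set.Ioi 0] (0:ℝ), φ x < s :=
    hev.filter_mono (nhdsWithin_mono 0 Set.Ioi_subset_Ici_self)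
  obtain ⟨x, hxs, hx0⟩ := (hev'.and self_mem_nhdsWithin).exists
  calc (0:ℝ) < x := hx0
    _ ≤ ginv φ s := le_csSup (ginv_set_bddAbove hO s) ⟨hx0.le, hxs.le⟩

lemma orlicz_ginv_le (hO : IsOrliczFunction φ) {s : ℝ} (hs : 0 ≤ s) : φ (ginv φ s) ≤ s := by
  have hclosed : IsClosed {t : ℝ | 0 ≤ t ∧ φ t ≤ s} := by
    have hco : ContinuousOn φ (Set.Ici 0) := fun p hp => orlicz_cwa hO hp
    have hset : {t : ℝ | 0 ≤ t ∧ φ t ≤ s} = Set.Ici 0 ∩ φ ⁻¹' (Set.Iic s) := by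
      ext t; simp [Set.mem_Ici, Set.mem_Iic]
    rw [hset]
    exact hco.preimage_isClosed_of_isClosed isClosed_Ici isClosed_Iic
  exact (hclosed.csSup_mem (ginv_set_nonempty hO hs) (ginv_set_bddAbove hO s)).2

lemma ginv_mono (hO : IsOrliczFunction φ) {s s' : ℝ} (hs : 0 ≤ s) (hss : s ≤ s') :
    ginv φ s ≤ ginv φ s' :=
  csSup_le_csSup (ginv_set_bddAbove hO s') (ginv_set_nonempty hO hs)
    (fun t ht => ⟨ht.1, ht.2.trans hss⟩)

lemma ginv_strict_mono (hO : IsOrliczFunction φ) {s s' : ℝ} (hs : 0 ≤ s) (hss : s < s') :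
    ginv φ s < ginv φ s' := by
  have hg0 : 0 ≤ ginv φ s := ginv_nonneg hO hs
  have hcwa := orlicz_cwa hO hg0
  have hφg : φ (ginv φ s) ≤ s := orlicz_ginv_le hO hs
  have hev : ∀ᶠ x in 𝓝[Set.Ici 0] (ginv φ s), φ x < s' :=
    hcwa (Iio_mem_nhds (lt_of_le_of_lt hφg hss))
  have hsub : 𝓝[Set.Ioi (ginv φ s)] (ginv φ s) ≤ 𝓝[Set.Ici 0] (ginv φ s) :=
    nhdsWithin_mono _ (fun x hx => le_trans hg0 (le_of_lt hx))
  have hev' : ∀ᶠ x in 𝓝[Set.Ioi (ginv φ s)] (ginv φ s), φ x < s' := hev.filter_mono hsub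
  obtain ⟨x, hxs, hx0⟩ := (hev'.and self_mem_nhdsWithin).exists
  calc ginv φ s < x := hx0
    _ ≤ ginv φ s' := le_csSup (ginv_set_bddAbove hO s') ⟨le_trans hg0 hx0.le, hxs.le⟩

lemma ginv_concave_comb (hO : IsOrliczFunction φ) {x y a b : ℝ} (hx : 0 ≤ x) (hy : 0 ≤ y)
    (ha : 0 ≤ a) (hb : 0 ≤ b) (hab : a + b = 1) :
    a * ginv φ x + b * ginv φ y ≤ ginv φ (a * x + b * y) := by
  have hgx := ginv_nonneg hO hx
  have hgy := ginv_nonneg hO hy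
  have h := hO.1.2 (Set.mem_Ici.mpr hgx) (Set.mem_Ici.mpr hgy) ha hb hab
  rw [smul_eq_mul, smul_eq_mul] at h
  refine le_csSup (ginv_set_bddAbove hO _) ⟨by positivity, ?_⟩
  calc φ (a * ginv φ x + b * ginv φ y) ≤ a * φ (ginv φ x) + b * φ (ginv φ y) := h
    _ ≤ a * x + b * y := by
        have h1 := orlicz_ginv_le hO hx
        have h2 := orlicz_ginv_le hO hy
        nlinarith


lemma weighted_jensen {W f : ℝ → ℝ}
    (hWiint : IntervalIntegrable W volume (-π) π)
    (hWpos : ∀ s, 0 ≤ W s)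
    (hWint : ∫ s in (-π)..π, W s = 2 * π)
    (hf : IntervalIntegrable (fun s => W s * f s) volume (-π) π)
    (hef : IntervalIntegrable (fun s => W s * Real.exp (f s)) volume (-π) π) :
    Real.exp ((∫ s in (-π)..π, W s * f s) / (2 * π))
      ≤ (∫ s in (-π)..π, W s * Real.exp (f s)) / (2 * π) := by
  have hπ : (0:ℝ) < 2 * π := by positivity
  set m : ℝ := (∫ s in (-π)..π, W s * f s) / (2 * π) with hmdef
  have hWf : ∫ s in (-π)..π, W s * f s = 2 * π * m := by
    rw [hmdef]; field_simp
  have hpt : ∀ x ∈ Set.Icc (-π) π,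
      Real.exp m * (W x * f x) + (Real.exp m * (1 - m)) * W x ≤ W x * Real.exp (f x) := by
    intro x _
    have h1 : f x - m + 1 ≤ Real.exp (f x - m) := Real.add_one_le_exp _
    have h2 : Real.exp m * (f x - m + 1) ≤ Real.exp (f x) := by
      calc Real.exp m * (f x - m + 1) ≤ Real.exp m * Real.exp (f x - m) :=
            mul_le_mul_of_nonneg_left h1 (Real.exp_pos m).le
        _ = Real.exp (f x) := by rw [← Real.exp_add]; congr 1; ring
    calc Real.exp m * (W x * f x) + (Real.exp m * (1 - m)) * W x
        = W x * (Real.exp m * (f x - m + 1)) := by ring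
      _ ≤ W x * Real.exp (f x) := mul_le_mul_of_nonneg_left h2 (hWpos x)
  have hLHSint : IntervalIntegrable
      (fun x => Real.exp m * (W x * f x) + (Real.exp m * (1 - m)) * W x) volume (-π) π :=
    (hf.const_mul _).add (hWiint.const_mul _)
  have hmono := intervalIntegral.integral_mono_on (by linarith [Real.pi_pos] : -π ≤ π)
    hLHSint hef hpt
  rw [intervalIntegral.integral_add (hf.const_mul _) (hWiint.const_mul _),
    intervalIntegral.integral_const_mul, intervalIntegral.integral_const_mul,
    hWf, hWint] at hmono
  rw [le_div_iff₀ hπ]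
  calc Real.exp m * (2 * π)
      = Real.exp m * (2 * π * m) + Real.exp m * (1 - m) * (2 * π) := by ring
    _ ≤ _ := hmono

lemma jensen_ratio {W p d : ℝ → ℝ}
    (hWiint : IntervalIntegrable W volume (-π) π)
    (hWpos : ∀ s, 0 < W s)
    (hWint : ∫ s in (-π)..π, W s = 2 * π)
    (hp : ∀ s, 0 < p s) (hd : ∀ s, 0 < d s) (hpd : ∀ s, p s ≤ d s)
    (hpm : AEStronglyMeasurable p (volume.restrict (Set.uIoc (-π) π)))
    (hdm : AEStronglyMeasurable d (volume.restrict (Set.uIoc (-π) π)))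
    (hWp : IntervalIntegrable (fun s => W s * Real.log (p s)) volume (-π) π)
    (hWd : IntervalIntegrable (fun s => W s * Real.log (d s)) volume (-π) π) :
    Real.exp ((∫ s in (-π)..π, W s * Real.log (p s)) / (2 * π)
        - (∫ s in (-π)..π, W s * Real.log (d s)) / (2 * π))
      ≤ (∫ s in (-π)..π, W s * (p s / d s)) / (2 * π) ∧
    IntervalIntegrable (fun s => W s * (p s / d s)) volume (-π) π := by
  have hWm : AEStronglyMeasurable W (volume.restrict (Set.uIoc (-π) π)) :=
    (intervalIntegrable_iff.mp hWiint).aestronglyMeasurable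
  have hqm : AEStronglyMeasurable (fun s => W s * (p s / d s))
      (volume.restrict (Set.uIoc (-π) π)) :=
    (hWm.aemeasurable.mul (hpm.aemeasurable.div hdm.aemeasurable)).aestronglyMeasurable
  have hq : IntervalIntegrable (fun s => W s * (p s / d s)) volume (-π) π := by
    apply hWiint.mono_fun hqm
    filter_upwards with s
    have h1 : 0 < p s / d s := div_pos (hp s) (hd s)
    have h2 : p s / d s ≤ 1 := (div_le_one (hd s)).mpr (hpd s)
    rw [Real.norm_eq_abs, Real.norm_eq_abs, abs_mul, abs_of_pos h1]
    calc |W s| * (p s / d s) ≤ |W s| * 1 :=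
          mul_le_mul_of_nonneg_left h2 (abs_nonneg _)
      _ = |W s| := mul_one _
  have heq : (fun s => W s * (Real.log (p s) - Real.log (d s)))
      = fun s => W s * Real.log (p s) - W s * Real.log (d s) := by
    funext s; ring
  have hint_f : IntervalIntegrable
      (fun s => W s * (Real.log (p s) - Real.log (d s))) volume (-π) π := by
    rw [heq]; exact hWp.sub hWd
  have hexp : (fun s => W s * Real.exp (Real.log (p s) - Real.log (d s)))
      = fun s => W s * (p s / d s) := by
    funext s
    rw [Real.exp_sub, Real.exp_log (hp s), Real.exp_log (hd s)]
  have hj := weighted_jensen hWiint (fun s => (hWpos s).le) hWint hint_f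
    (by rw [hexp]; exact hq)
  rw [hexp, heq, intervalIntegral.integral_sub hWp hWd, sub_div] at hj
  exact ⟨hj, hq⟩

lemma exp_int_superadd {W u v : ℝ → ℝ}
    (hWiint : IntervalIntegrable W volume (-π) π)
    (hWpos : ∀ s, 0 < W s)
    (hWint : ∫ s in (-π)..π, W s = 2 * π)
    (hu : ∀ s, 0 < u s) (hv : ∀ s, 0 < v s)
    (hum : AEStronglyMeasurable u (volume.restrict (Set.uIoc (-π) π)))
    (hvm : AEStronglyMeasurable v (volume.restrict (Set.uIoc (-π) π)))
    (hWu : IntervalIntegrable (fun s => W s * Real.log (u s)) volume (-π) π)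
    (hWv : IntervalIntegrable (fun s => W s * Real.log (v s)) volume (-π) π)
    (hWuv : IntervalIntegrable (fun s => W s * Real.log (u s + v s)) volume (-π) π) :
    Real.exp ((∫ s in (-π)..π, W s * Real.log (u s)) / (2 * π))
      + Real.exp ((∫ s in (-π)..π, W s * Real.log (v s)) / (2 * π))
      ≤ Real.exp ((∫ s in (-π)..π, W s * Real.log (u s + v s)) / (2 * π)) := by
  have hπ : (0:ℝ) < 2 * π := by positivity
  have huv : ∀ s, 0 < u s + v s := fun s => add_pos (hu s) (hv s)
  obtain ⟨h1, hq1⟩ := jensen_ratio hWiint hWpos hWint hu huv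
    (fun s => le_add_of_nonneg_right (hv s).le) hum (hum.add hvm) hWu hWuv
  obtain ⟨h2, hq2⟩ := jensen_ratio hWiint hWpos hWint hv huv
    (fun s => le_add_of_nonneg_left (hu s).le) hvm (hum.add hvm) hWv hWuv
  have hsum : (∫ s in (-π)..π, W s * (u s / (u s + v s)))
      + ∫ s in (-π)..π, W s * (v s / (u s + v s)) = 2 * π := by
    rw [← intervalIntegral.integral_add hq1 hq2, ← hWint]
    congr 1
    funext s
    rw [← mul_add, ← add_div, div_self (huv s).ne', mul_one]
  set A : ℝ := (∫ s in (-π)..π, W s * Real.log (u s)) / (2 * π)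
  set B : ℝ := (∫ s in (-π)..π, W s * Real.log (v s)) / (2 * π)
  set M : ℝ := (∫ s in (-π)..π, W s * Real.log (u s + v s)) / (2 * π)
  have hcomb : Real.exp (A - M) + Real.exp (B - M) ≤ 1 := by
    calc Real.exp (A - M) + Real.exp (B - M)
        ≤ (∫ s in (-π)..π, W s * (u s / (u s + v s))) / (2 * π)
          + (∫ s in (-π)..π, W s * (v s / (u s + v s))) / (2 * π) := add_le_add h1 h2
      _ = 1 := by rw [← add_div, hsum]; field_simp
  rw [Real.exp_sub, Real.exp_sub, ← add_div, div_le_one (Real.exp_pos M)] at hcomb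
  exact hcomb

lemma abs_log_combo {a b p q : ℝ} (ha : 0 < a) (ha1 : a ≤ 1) (hb : 0 < b) (hb1 : b ≤ 1)
    (hp : 0 < p) (hq : 0 < q) :
    |Real.log (a * p + b * q)| ≤ |Real.log a| + Real.log 2 + |Real.log p| + |Real.log q| := by
  have hsum : 0 < a * p + b * q := by positivity
  have hl2 : (0:ℝ) ≤ Real.log 2 := Real.log_nonneg (by norm_num)
  rw [abs_le]
  constructor
  · have h1 : Real.log a + Real.log p ≤ Real.log (a * p + b * q) := by
      rw [← Real.log_mul ha.ne' hp.ne']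
      exact Real.log_le_log (by positivity) (by nlinarith)
    have hla : -|Real.log a| ≤ Real.log a := neg_abs_le _
    have hlp : -|Real.log p| ≤ Real.log p := neg_abs_le _
    have := abs_nonneg (Real.log q)
    linarith
  · have hle : a * p + b * q ≤ 2 * max p q := by
      have h1 : p ≤ max p q := le_max_left _ _
      have h2 : q ≤ max p q := le_max_right _ _
      nlinarith
    have h3 := Real.log_le_log hsum hle
    rw [Real.log_mul two_ne_zero (by positivity : max p q ≠ 0)] at h3
    have hmax : Real.log (max p q) ≤ |Real.log p| + |Real.log q| := by
      rcases le_total p q with h | h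
      · rw [max_eq_right h]
        linarith [le_abs_self (Real.log q), abs_nonneg (Real.log p)]
      · rw [max_eq_left h]
        linarith [le_abs_self (Real.log p), abs_nonneg (Real.log q)]
    linarith [abs_nonneg (Real.log a)]

lemma main_core (φ : ℝ → ℝ → ℝ)
    (horlicz : ∀ w : ℝ, IsOrliczFunction (φ w) ∧ IsNondegenerate (φ w))
    (t₀ : ℝ)
    (hint : ∀ t ∈ Set.Ioo (0 : ℝ) t₀,
      IntervalIntegrable (fun w => Real.log (ginv (φ w) t)) volume (-π) π)
    (W : ℝ → ℝ) (hWc : Continuous W) (hWpos : ∀ s, 0 < W s)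
    (hWint : ∫ s in (-π)..π, W s = 2 * π)
    (Iz : ℝ → ℝ) (hIz0 : Iz 0 = 0)
    (hIzt : ∀ t : ℝ, 0 < t → Iz t
      = Real.exp ((∫ s in (-π)..π, W s * Real.log (ginv (φ s) t)) / (2 * π))) :
    ConcaveOn ℝ (Set.Ico 0 t₀) Iz ∧ StrictMonoOn Iz (Set.Ico 0 t₀) := by
  have hπ : (0:ℝ) < 2 * π := by positivity
  have hOw : ∀ w, IsOrliczFunction (φ w) := fun w => (horlicz w).1
  have gpos : ∀ s t : ℝ, 0 < t → 0 < ginv (φ s) t := fun s t ht => ginv_pos (hOw s) ht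
  have hWiint : IntervalIntegrable W volume (-π) π := hWc.intervalIntegrable _ _
  set L : ℝ → ℝ := fun t => ∫ s in (-π)..π, W s * Real.log (ginv (φ s) t) with hLdef
  have hIzt' : ∀ t : ℝ, 0 < t → Iz t = Real.exp (L t / (2 * π)) := hIzt
  have hWlog : ∀ t, t ∈ Set.Ioo (0:ℝ) t₀ →
      IntervalIntegrable (fun s => W s * Real.log (ginv (φ s) t)) volume (-π) π :=
    fun t ht => (hint t ht).continuousOn_mul hWc.continuousOn
  have hgm : ∀ t, t ∈ Set.Ioo (0:ℝ) t₀ → AEStronglyMeasurable (fun s => ginv (φ s) t)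
      (volume.restrict (Set.uIoc (-π) π)) := by
    intro t ht
    have h := (intervalIntegrable_iff.mp (hint t ht)).aestronglyMeasurable
    have heq : (fun s => ginv (φ s) t) = fun s => Real.exp (Real.log (ginv (φ s) t)) :=
      funext fun s => (Real.exp_log (gpos s t ht.1)).symm
    rw [heq]
    exact Real.continuous_exp.comp_aestronglyMeasurable h
  have hscale : ∀ c t : ℝ, 0 < c → t ∈ Set.Ioo (0:ℝ) t₀ →
      IntervalIntegrable (fun s => W s * Real.log (c * ginv (φ s) t)) volume (-π) π ∧
      (∫ s in (-π)..π, W s * Real.log (c * ginv (φ s) t)) = 2 * π * Real.log c + L t := by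
    intro c t hc ht
    have heq : (fun s => W s * Real.log (c * ginv (φ s) t))
        = fun s => Real.log c * W s + W s * Real.log (ginv (φ s) t) := by
      funext s
      rw [Real.log_mul hc.ne' (gpos s t ht.1).ne']
      ring
    constructor
    · rw [heq]; exact (hWiint.const_mul _).add (hWlog t ht)
    · rw [heq, intervalIntegral.integral_add (hWiint.const_mul _) (hWlog t ht),
        intervalIntegral.integral_const_mul, hWint]
      ring
  have hexpc : ∀ c X : ℝ, 0 < c →
      Real.exp ((2 * π * Real.log c + X) / (2 * π)) = c * Real.exp (X / (2 * π)) := by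
    intro c X hc
    rw [show (2 * π * Real.log c + X) / (2 * π) = Real.log c + X / (2 * π) by
      field_simp, Real.exp_add, Real.exp_log hc]
  have hnegpi : -π ≤ π := by linarith [Real.pi_pos]
  have hkey : ∀ c t : ℝ, 0 < c → c ≤ 1 → t ∈ Set.Ioo (0:ℝ) t₀ → c * Iz t ≤ Iz (c * t) := by
    intro c t hc hc1 ht
    have hct : c * t ∈ Set.Ioo (0:ℝ) t₀ := ⟨mul_pos hc ht.1, by nlinarith [ht.1, ht.2]⟩
    have hpt : ∀ s : ℝ, c * ginv (φ s) t ≤ ginv (φ s) (c * t) := by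
      intro s
      have h := ginv_concave_comb (hOw s) ht.1.le (le_refl (0:ℝ)) hc.le
        (by linarith : (0:ℝ) ≤ 1 - c) (by ring)
      rw [show c * t + (1 - c) * 0 = c * t by ring] at h
      have h0 : 0 ≤ ginv (φ s) 0 := ginv_nonneg (hOw s) le_rfl
      nlinarith
    have hmono := intervalIntegral.integral_mono_on hnegpi (hscale c t hc ht).1
      (hWlog (c * t) hct)
      (fun s _ => mul_le_mul_of_nonneg_left
        (Real.log_le_log (mul_pos hc (gpos s t ht.1)) (hpt s)) (hWpos s).le)
    rw [(hscale c t hc ht).2] at hmono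
    rw [hIzt' t ht.1, hIzt' (c * t) hct.1, ← hexpc c (L t) hc]
    exact Real.exp_le_exp.mpr (by gcongr)
  have hLlt : ∀ x y : ℝ, x ∈ Set.Ioo (0:ℝ) t₀ → y ∈ Set.Ioo (0:ℝ) t₀ → x < y → L x < L y := by
    intro x y hx hy hxy
    have hpos := intervalIntegral.intervalIntegral_pos_of_pos_on
      (f := fun s => W s * Real.log (ginv (φ s) y) - W s * Real.log (ginv (φ s) x))
      ((hWlog y hy).sub (hWlog x hx))
      (fun s _ => by
        show 0 < W s * Real.log (ginv (φ s) y) - W s * Real.log (ginv (φ s) x)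
        have hlt := Real.log_lt_log (gpos s x hx.1) (ginv_strict_mono (hOw s) hx.1.le hxy)
        have h := mul_pos (hWpos s) (sub_pos.mpr hlt)
        rw [mul_sub] at h
        linarith)
      (by linarith [Real.pi_pos])
    rw [intervalIntegral.integral_sub (hWlog y hy) (hWlog x hx)] at hpos
    have hLL : L y - L x = (∫ s in (-π)..π, W s * Real.log (ginv (φ s) y))
        - ∫ s in (-π)..π, W s * Real.log (ginv (φ s) x) := rfl
    linarith
  have hmonoIz : StrictMonoOn Iz (Set.Ico 0 t₀) := by
    intro x hx y hy hxy
    rcases eq_or_lt_of_le hx.1 with h0 | hx0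
    · have hy0 : 0 < y := by rw [← h0] at hxy; exact hxy
      rw [← h0, hIz0, hIzt' y hy0]
      exact Real.exp_pos _
    · have hy0 : 0 < y := hx0.trans hxy
      rw [hIzt' x hx0, hIzt' y hy0]
      have hlt := hLlt x y ⟨hx0, hx.2⟩ ⟨hy0, hy.2⟩ hxy
      exact Real.exp_lt_exp.mpr (by gcongr)
  refine ⟨⟨convex_Ico 0 t₀, ?_⟩, hmonoIz⟩
  intro x hx y hy a b ha hb hab
  simp only [smul_eq_mul]
  rcases eq_or_lt_of_le ha with ha0 | ha'
  · rw [← ha0, show b = 1 by linarith]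
    norm_num
  rcases eq_or_lt_of_le hb with hb0 | hb'
  · rw [← hb0, show a = 1 by linarith]
    norm_num
  have ha1 : a ≤ 1 := by linarith
  have hb1 : b ≤ 1 := by linarith
  rcases eq_or_lt_of_le hx.1 with hx0 | hx0
  · rcases eq_or_lt_of_le hy.1 with hy0 | hy0
    · rw [← hx0, ← hy0, show a * (0:ℝ) + b * 0 = 0 by ring, hIz0]
      norm_num
    · rw [← hx0, hIz0, mul_zero, zero_add, zero_add]
      exact hkey b y hb' hb1 ⟨hy0, hy.2⟩
  rcases eq_or_lt_of_le hy.1 with hy0 | hy0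
  · rw [← hy0, hIz0, mul_zero, add_zero, add_zero]
    exact hkey a x ha' ha1 ⟨hx0, hx.2⟩
  -- main case
  have hx' : x ∈ Set.Ioo (0:ℝ) t₀ := ⟨hx0, hx.2⟩
  have hy' : y ∈ Set.Ioo (0:ℝ) t₀ := ⟨hy0, hy.2⟩
  have hz : a * x + b * y ∈ Set.Ioo (0:ℝ) t₀ :=
    ⟨add_pos (mul_pos ha' hx0) (mul_pos hb' hy0), by nlinarith [hx.2, hy.2]⟩
  have hu : ∀ s : ℝ, 0 < a * ginv (φ s) x := fun s => mul_pos ha' (gpos s x hx0)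
  have hv : ∀ s : ℝ, 0 < b * ginv (φ s) y := fun s => mul_pos hb' (gpos s y hy0)
  have hum : AEStronglyMeasurable (fun s => a * ginv (φ s) x)
      (volume.restrict (Set.uIoc (-π) π)) :=
    ((hgm x hx').aemeasurable.const_mul a).aestronglyMeasurable
  have hvm : AEStronglyMeasurable (fun s => b * ginv (φ s) y)
      (volume.restrict (Set.uIoc (-π) π)) :=
    ((hgm y hy').aemeasurable.const_mul b).aestronglyMeasurable
  have hloguv : IntervalIntegrable
      (fun s => Real.log (a * ginv (φ s) x + b * ginv (φ s) y)) volume (-π) π := by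
    apply IntervalIntegrable.mono_fun'
      (g := fun s => |Real.log a| + Real.log 2
        + |Real.log (ginv (φ s) x)| + |Real.log (ginv (φ s) y)|)
    · exact ((intervalIntegrable_const.add (hint x hx').abs).add (hint y hy').abs)
    · exact (Real.measurable_log.comp_aemeasurable
        (((hgm x hx').aemeasurable.const_mul a).add
          ((hgm y hy').aemeasurable.const_mul b))).aestronglyMeasurable
    · filter_upwards with s
      rw [Real.norm_eq_abs]
      exact abs_log_combo ha' ha1 hb' hb1 (gpos s x hx0) (gpos s y hy0)
  have hWuv : IntervalIntegrable
      (fun s => W s * Real.log (a * ginv (φ s) x + b * ginv (φ s) y)) volume (-π) π :=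
    hloguv.continuousOn_mul hWc.continuousOn
  have hsuper := exp_int_superadd (u := fun s => a * ginv (φ s) x)
    (v := fun s => b * ginv (φ s) y) hWiint hWpos hWint hu hv hum hvm
    (hscale a x ha' hx').1 (hscale b y hb' hy').1 hWuv
  have hMle : (∫ s in (-π)..π, W s * Real.log (a * ginv (φ s) x + b * ginv (φ s) y))
      ≤ L (a * x + b * y) := by
    apply intervalIntegral.integral_mono_on hnegpi hWuv (hWlog _ hz)
    intro s _
    apply mul_le_mul_of_nonneg_left _ (hWpos s).le
    exact Real.log_le_log (add_pos (hu s) (hv s))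
      (ginv_concave_comb (hOw s) hx.1 hy.1 ha hb hab)
  have h2 : Real.exp ((∫ s in (-π)..π,
        W s * Real.log (a * ginv (φ s) x + b * ginv (φ s) y)) / (2 * π))
      ≤ Real.exp (L (a * x + b * y) / (2 * π)) := Real.exp_le_exp.mpr (by gcongr)
  rw [hIzt' x hx0, hIzt' y hy0, hIzt' (a * x + b * y) hz.1,
    ← hexpc a (L x) ha', ← hexpc b (L y) hb',
    ← (hscale a x ha' hx').2, ← (hscale b y hb' hy').2]
  exact le_trans hsuper h2

/-- Proposition on the interpolated inverse: if `{φ_w}` is a family of nondegenerate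
Orlicz functions (indexed by the angle, `2π`-periodically), Borel in `w`, with
`w ↦ log φ_w⁻¹(t)` integrable for `t ∈ (0,t₀)`, then the function
`I_z(t) = exp((1/2π) ∫ P(r,θ-s) log φ_{e^{is}}⁻¹(t) ds)` (with `I_z(0) = 0` by the
conventions `log 0 = -∞`, `exp(-∞) = 0`) vanishes at `0` and is concave and strictly
increasing on `[0,t')` for some `0 < t' ≤ t₀`. -/
theorem statement2 (φ : ℝ → ℝ → ℝ)
    (horlicz : ∀ w : ℝ, IsOrliczFunction (φ w) ∧ IsNondegenerate (φ w))
    (hper : ∀ t : ℝ, Function.Periodic (fun w => φ w t) (2 * π))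
    (hborel : ∀ t : ℝ, 0 ≤ t → Measurable fun w => φ w t)
    (t₀ : ℝ) (ht₀ : 0 < t₀)
    (hint : ∀ t ∈ Set.Ioo (0 : ℝ) t₀,
      IntervalIntegrable (fun w => Real.log (ginv (φ w) t)) volume (-π) π)
    (r θ : ℝ) (hr0 : 0 ≤ r) (hr1 : r < 1)
    (Iz : ℝ → ℝ)
    (hIz : ∀ t : ℝ, Iz t = if t ≤ 0 then 0 else
      Real.exp ((1 / (2 * π)) *
        ∫ s in (-π)..π, poissonKernelRT r (θ - s) * Real.log (ginv (φ s) t))) :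
    Iz 0 = 0 ∧ ∃ t' : ℝ, 0 < t' ∧ t' ≤ t₀ ∧
      ConcaveOn ℝ (Set.Ico 0 t') Iz ∧ StrictMonoOn Iz (Set.Ico 0 t') := by
  have hIz0 : Iz 0 = 0 := by rw [hIz 0]; simp
  have hWc : Continuous fun s => poissonKernelRT r (θ - s) :=
    (pk_continuous hr0 hr1).comp (continuous_const.sub continuous_id)
  have hWpos : ∀ s, 0 < poissonKernelRT r (θ - s) := fun s => pk_pos hr0 hr1 _
  have hWint : ∫ s in (-π)..π, poissonKernelRT r (θ - s) = 2 * π :=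
    pk_shift_integral hr0 hr1 θ
  have hIzt : ∀ t : ℝ, 0 < t → Iz t = Real.exp
      ((∫ s in (-π)..π, poissonKernelRT r (θ - s) * Real.log (ginv (φ s) t)) / (2 * π)) := by
    intro t ht
    rw [hIz t, if_neg (not_le.mpr ht), one_div, inv_mul_eq_div]
  obtain ⟨hconc, hmono⟩ := main_core φ horlicz t₀ hint _ hWc hWpos hWint Iz hIz0 hIzt
  exact ⟨hIz0, t₀, ht₀, le_rfl, hconc, hmono⟩
end
end

section
/- Let {φ_w}_{w∈𝕋} be a family of nondegenerate Orlicz functions such that w ↦ φ_w(t) is Borel for every t ≥ 0. Then the map T : 𝕋 × ℂ^ℕ → [0,∞] defined by T(w,x) = inf{ρ > 0 : ∑_{n=1}^∞ φ_w(|x(n)|/ρ) ≤ 1} (with inf ∅ = ∞), i.e. the Luxemburg norm of x in ℓ_{φ_w}, is Borel measurable, where ℂ^ℕ carries the product topology. -/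
open MeasureTheory Real Set Filter
open scoped ENNReal

noncomputable section

instance : Fact (0 < 2 * π) := ⟨by positivity⟩

/-- The Luxemburg norm of `x` in `ℓ_φ`, with values in `[0,∞]`
(`inf ∅ = ∞`, i.e. the norm is `∞` when `x ∉ ℓ_φ`). -/
def luxNorm (φ : ℝ → ℝ) (x : ℕ → ℂ) : ℝ≥0∞ :=
  sInf {p : ℝ≥0∞ | ∃ ρ : ℝ, 0 < ρ ∧ p = ENNReal.ofReal ρ ∧
    (∑' n, ENNReal.ofReal (φ (‖x n‖ / ρ))) ≤ 1}

/-- An Orlicz function, corrected to `max t 0`, is continuous on all of `ℝ`. -/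
lemma IsOrliczFunction.continuous_max {φ : ℝ → ℝ} (h : IsOrliczFunction φ) :
    Continuous fun t => φ (max t 0) := by
  obtain ⟨hconv, hmono, h0, hnn, -⟩ := h
  have hcont : ContinuousOn φ (Set.Ici 0) := by
    intro t ht
    rcases eq_or_lt_of_le (show (0:ℝ) ≤ t from ht) with rfl | htpos
    · -- continuity within `Ici 0` at `0` by squeezing: `0 ≤ φ t ≤ t * φ 1` on `[0,1]`
      have hb : ∀ᶠ s in nhdsWithin 0 (Set.Ici 0), φ s ≤ s * φ 1 := by
        filter_upwards [Icc_mem_nhdsGE_of_mem (by norm_num : (0:ℝ) ∈ Set.Ico 0 1)]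
          with s hs
        have hs0 : (0:ℝ) ≤ s := hs.1
        have hs1 : s ≤ 1 := hs.2
        have := hconv.2 (show (1:ℝ) ∈ Set.Ici 0 by norm_num)
          (Set.mem_Ici.mpr le_rfl) (by linarith : 0 ≤ s)
          (by linarith : 0 ≤ 1 - s) (by ring)
        simpa [h0, mul_comm] using this
      have hb0 : ∀ᶠ s in nhdsWithin 0 (Set.Ici 0), 0 ≤ φ s := by
        filter_upwards [self_mem_nhdsWithin] with s hs using hnn s hs
      have hlim : Tendsto (fun s : ℝ => s * φ 1) (nhdsWithin 0 (Set.Ici 0)) (nhds 0) := by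
        have : Tendsto (fun s : ℝ => s * φ 1) (nhds 0) (nhds (0 * φ 1)) :=
          (continuous_id.mul continuous_const).tendsto 0
        simpa using this.mono_left nhdsWithin_le_nhds
      have : Tendsto φ (nhdsWithin 0 (Set.Ici 0)) (nhds 0) := by
        apply squeeze_zero' hb0 hb hlim
      simpa [ContinuousWithinAt, h0] using this
    · have : ContinuousOn φ (interior (Set.Ici 0)) := hconv.continuousOn_interior
      have hAt : ContinuousAt φ t :=
        this.continuousAt (by simpa [interior_Ici] using Ioi_mem_nhds htpos)
      exact hAt.continuousWithinAt
  exact hcont.comp_continuous (continuous_id.max continuous_const)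
    (fun t => Set.mem_Ici.mpr (le_max_right _ _))

/-- The key rewriting of the Luxemburg norm as a countable infimum over rationals. -/
lemma luxNorm_eq_iInf {φ : ℝ → ℝ} (h : IsOrliczFunction φ) (x : ℕ → ℂ) :
    luxNorm φ x = ⨅ q : ℚ,
      (if 0 < (q:ℝ) ∧ (∑' n, ENNReal.ofReal (φ (‖x n‖ / (q:ℝ)))) ≤ 1
        then ENNReal.ofReal (q:ℝ) else ⊤) := by
  obtain ⟨-, hmono, -, hnn, -⟩ := h
  apply le_antisymm
  · refine le_iInf fun q => ?_
    split_ifs with hq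
    · exact sInf_le ⟨(q:ℝ), hq.1, rfl, hq.2⟩
    · exact le_top
  · refine le_sInf fun p hp => ?_
    obtain ⟨ρ, hρ, rfl, hsum⟩ := hp
    refine ENNReal.le_of_forall_pos_le_add fun ε hε _ => ?_
    obtain ⟨q, hq1, hq2⟩ := exists_rat_btwn
      (lt_add_of_pos_right ρ (by exact_mod_cast hε : (0:ℝ) < (ε:ℝ)))
    have hq0 : 0 < (q:ℝ) := lt_trans hρ hq1
    have hsum' : (∑' n, ENNReal.ofReal (φ (‖x n‖ / (q:ℝ)))) ≤ 1 := by
      refine le_trans (ENNReal.tsum_le_tsum fun n => ?_) hsum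
      apply ENNReal.ofReal_le_ofReal
      apply hmono (by positivity : (0:ℝ) ≤ ‖x n‖ / (q:ℝ))
        (by positivity : (0:ℝ) ≤ ‖x n‖ / ρ)
      exact div_le_div_of_nonneg_left (norm_nonneg _) hρ hq1.le
    calc (⨅ q : ℚ,
        (if 0 < (q:ℝ) ∧ (∑' n, ENNReal.ofReal (φ (‖x n‖ / (q:ℝ)))) ≤ 1
          then ENNReal.ofReal (q:ℝ) else ⊤))
        ≤ ENNReal.ofReal (q:ℝ) := by
          refine le_trans (iInf_le _ q) ?_
          rw [if_pos ⟨hq0, hsum'⟩]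
      _ ≤ ENNReal.ofReal ρ + ε := by
          refine le_trans (ENNReal.ofReal_le_ofReal hq2.le) ?_
          refine le_trans ENNReal.ofReal_add_le ?_
          rw [ENNReal.ofReal_coe_nnreal]

/-- If `{φ_w}_{w ∈ 𝕋}` is a family of nondegenerate Orlicz functions with `w ↦ φ_w(t)`
Borel for every `t ≥ 0`, then `(w,x) ↦ ‖x‖_{ℓ_{φ_w}}` is Borel on `𝕋 × ℂ^ℕ`, where
`ℂ^ℕ` carries the product topology. -/
theorem statement3 (φ : AddCircle (2 * π) → ℝ → ℝ)
    (horlicz : ∀ w, IsOrliczFunction (φ w) ∧ IsNondegenerate (φ w))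
    (hborel : ∀ t : ℝ, 0 ≤ t → Measurable fun w => φ w t) :
    Measurable (fun p : AddCircle (2 * π) × (ℕ → ℂ) => luxNorm (φ p.1) p.2) := by
  -- joint measurability of `(s, w) ↦ φ w (max s 0)`
  have hjoint : Measurable (Function.uncurry fun (s : ℝ) (w : AddCircle (2 * π)) =>
      φ w (max s 0)) := by
    apply measurable_uncurry_of_continuous_of_measurable
    · intro w
      exact (horlicz w).1.continuous_max
    · intro s
      exact hborel (max s 0) (le_max_right _ _)
  -- measurability of the modular sums at each rational scale
  have hS : ∀ q : ℚ, 0 < (q:ℝ) → Measurable (fun p : AddCircle (2 * π) × (ℕ → ℂ) =>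
      ∑' n, ENNReal.ofReal (φ p.1 (‖p.2 n‖ / (q:ℝ)))) := by
    intro q hq
    apply Measurable.ennreal_tsum
    intro n
    apply ENNReal.measurable_ofReal.comp
    have habs : Measurable (fun p : AddCircle (2 * π) × (ℕ → ℂ) =>
        ‖p.2 n‖ / (q:ℝ)) := by
      apply Measurable.div_const
      exact (continuous_norm.comp ((continuous_apply n).comp continuous_snd)).measurable
    have : (fun p : AddCircle (2 * π) × (ℕ → ℂ) => φ p.1 (‖p.2 n‖ / (q:ℝ)))
        = (Function.uncurry fun (s : ℝ) (w : AddCircle (2 * π)) => φ w (max s 0)) ∘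
          (fun p => (‖p.2 n‖ / (q:ℝ), p.1)) := by
      funext p
      simp [Function.uncurry, max_eq_left (div_nonneg (norm_nonneg _) hq.le)]
    rw [this]
    exact hjoint.comp (habs.prodMk measurable_fst)
  -- rewrite and conclude
  have : (fun p : AddCircle (2 * π) × (ℕ → ℂ) => luxNorm (φ p.1) p.2)
      = fun p => ⨅ q : ℚ,
        (if 0 < (q:ℝ) ∧ (∑' n, ENNReal.ofReal (φ p.1 (‖p.2 n‖ / (q:ℝ)))) ≤ 1
          then ENNReal.ofReal (q:ℝ) else ⊤) := by
    funext p
    exact luxNorm_eq_iInf (horlicz p.1).1 p.2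
  rw [this]
  apply Measurable.iInf
  intro q
  by_cases hq : 0 < (q:ℝ)
  · have : (fun p : AddCircle (2 * π) × (ℕ → ℂ) =>
        (if 0 < (q:ℝ) ∧ (∑' n, ENNReal.ofReal (φ p.1 (‖p.2 n‖ / (q:ℝ)))) ≤ 1
          then ENNReal.ofReal (q:ℝ) else ⊤))
        = fun p => (if (∑' n, ENNReal.ofReal (φ p.1 (‖p.2 n‖ / (q:ℝ)))) ≤ 1
          then ENNReal.ofReal (q:ℝ) else ⊤) := by
      funext p; simp [hq]
    rw [this]
    exact Measurable.ite (measurableSet_le (hS q hq) measurable_const)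
      measurable_const measurable_const
  · simp [hq]
end
end

section
/- Let n ∈ ℕ, let φ_1, …, φ_n be nondegenerate Orlicz functions, let θ_1, …, θ_n > 0 with ∑_j θ_j = 1, and let φ_z be a nondegenerate Orlicz function satisfying φ_z^{-1}(s) = ∏_{j=1}^n (φ_j^{-1}(s))^{θ_j} for all s ≥ 0. Then the set P = {x ∈ ℂ^ℕ : there exist x_j ∈ ℓ_{φ_j} with |x(k)| = ∏_{j=1}^n |x_j(k)|^{θ_j} for all k} equals ℓ_{φ_z} as a set, and moreover there is a constant C > 0 (depending only on n) such that for every x ∈ ℓ_{φ_z}: inf{∏_{j=1}^n ‖x_j‖_{ℓ_{φ_j}}^{θ_j} : |x| = ∏_j |x_j|^{θ_j}, x_j ∈ ℓ_{φ_j}} ≤ ‖x‖_{ℓ_{φ_z}} ≤ C · inf{∏_{j=1}^n ‖x_j‖_{ℓ_{φ_j}}^{θ_j} : |x| = ∏_j |x_j|^{θ_j}, x_j ∈ ℓ_{φ_j}}. -/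
open MeasureTheory Real Set Filter
open scoped ENNReal Topology

noncomputable section

/-- Membership in the Orlicz sequence space `ℓ_φ`. -/
def MemOrlicz (φ : ℝ → ℝ) (x : ℕ → ℂ) : Prop :=
  ∃ ρ : ℝ, 0 < ρ ∧ (∑' n, ENNReal.ofReal (φ (‖x n‖ / ρ))) < ⊤

/-- The set of products `∏_j ‖x_j‖_{ℓ_{φ_j}}^{θ_j}` over all factorizations
`|x| = ∏_j |x_j|^{θ_j}` with `x_j ∈ ℓ_{φ_j}`. -/
def factorizationSet {n : ℕ} (φ : Fin n → ℝ → ℝ) (θ : Fin n → ℝ) (x : ℕ → ℂ) :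
    Set ℝ≥0∞ :=
  {c : ℝ≥0∞ | ∃ xs : Fin n → (ℕ → ℂ), (∀ j, MemOrlicz (φ j) (xs j)) ∧
    (∀ k : ℕ, ‖x k‖ = ∏ j, ‖xs j k‖ ^ θ j) ∧
    c = ∏ j, luxNorm (φ j) (xs j) ^ θ j}

namespace LozAux

variable {φ : ℝ → ℝ} {s t : ℝ} {x y : ℕ → ℂ}

lemma smul_le (hO : IsOrliczFunction φ) {t l : ℝ} (ht : 0 ≤ t) (hl0 : 0 ≤ l) (hl1 : l ≤ 1) :
    φ (l * t) ≤ l * φ t := by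
  have h := hO.1.2 (x := t) (y := 0) ht (le_refl (0:ℝ)) hl0 (by linarith : (0:ℝ) ≤ 1 - l) (by ring)
  simpa [smul_eq_mul, hO.2.2.1] using h

lemma bddAbove_set (hO : IsOrliczFunction φ) (s : ℝ) : BddAbove {t : ℝ | 0 ≤ t ∧ φ t ≤ s} := by
  obtain ⟨T, hT⟩ := (tendsto_atTop.mp hO.2.2.2.2 (s + 1)).exists_forall_of_atTop
  exact ⟨T, fun t ht => by
    by_contra h
    push_neg at h
    have := hT t h.le
    linarith [ht.2]⟩

lemma zero_mem_set (hO : IsOrliczFunction φ) (hs : 0 ≤ s) : (0:ℝ) ∈ {t : ℝ | 0 ≤ t ∧ φ t ≤ s} :=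
  ⟨le_refl _, by rw [hO.2.2.1]; exact hs⟩

lemma ginv_nonneg (hO : IsOrliczFunction φ) (hs : 0 ≤ s) : 0 ≤ ginv φ s :=
  le_csSup (bddAbove_set hO s) (zero_mem_set hO hs)

lemma le_ginv (hO : IsOrliczFunction φ) (ht : 0 ≤ t) (h : φ t ≤ s) : t ≤ ginv φ s :=
  le_csSup (bddAbove_set hO s) ⟨ht, h⟩

lemma phi_ginv_le (hO : IsOrliczFunction φ) (hs : 0 ≤ s) : φ (ginv φ s) ≤ s := by
  set M := ginv φ s with hM
  have hM0 : 0 ≤ M := ginv_nonneg hO hs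
  rcases eq_or_lt_of_le hM0 with h0 | hMpos
  · rw [← h0, hO.2.2.1]; exact hs
  · have key : ∀ t, 0 ≤ t → t < M → φ t ≤ s := by
      intro t ht htM
      obtain ⟨u, hu, htu⟩ := exists_lt_of_lt_csSup ⟨0, zero_mem_set hO hs⟩ htM
      exact (hO.2.1 (mem_Ici.mpr ht) (mem_Ici.mpr hu.1) htu.le).trans hu.2
    have hconv : ConvexOn ℝ (Ioi (0:ℝ)) φ := hO.1.subset Ioi_subset_Ici_self (convex_Ioi 0)
    have hcont : ContinuousAt φ M :=
      (hconv.continuousOn isOpen_Ioi).continuousAt (isOpen_Ioi.mem_nhds hMpos)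
    have hne : (𝓝[Ioo 0 M] M).NeBot := right_nhdsWithin_Ioo_neBot hMpos
    have htend : Tendsto φ (𝓝[Ioo 0 M] M) (𝓝 (φ M)) :=
      hcont.continuousWithinAt.tendsto
    refine le_of_tendsto htend ?_
    filter_upwards [self_mem_nhdsWithin] with t ht
    exact key t ht.1.le ht.2

lemma luxNorm_le {ρ : ℝ} (hρ : 0 < ρ)
    (h : (∑' k, ENNReal.ofReal (φ (‖x k‖ / ρ))) ≤ 1) :
    luxNorm φ x ≤ ENNReal.ofReal ρ :=
  sInf_le ⟨ρ, hρ, rfl, h⟩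

lemma luxNorm_lt_top (hO : IsOrliczFunction φ) (h : MemOrlicz φ x) : luxNorm φ x < ⊤ := by
  obtain ⟨ρ, hρ, hS⟩ := h
  set S := ∑' k, ENNReal.ofReal (φ (‖x k‖ / ρ)) with hSdef
  set m : ℝ := S.toReal + 1 with hm
  have hm1 : 1 ≤ m := by simp [hm, ENNReal.toReal_nonneg]
  have hmpos : 0 < m := lt_of_lt_of_le one_pos hm1
  have key : (∑' k, ENNReal.ofReal (φ (‖x k‖ / (ρ * m)))) ≤ 1 := by
    have hptw : ∀ k, ENNReal.ofReal (φ (‖x k‖ / (ρ * m)))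
        ≤ ENNReal.ofReal (1 / m) * ENNReal.ofReal (φ (‖x k‖ / ρ)) := by
      intro k
      rw [← ENNReal.ofReal_mul (by positivity)]
      refine ENNReal.ofReal_le_ofReal ?_
      have h1 : ‖x k‖ / (ρ * m) = (1 / m) * (‖x k‖ / ρ) := by
        rw [one_div, inv_mul_eq_div, div_div, mul_comm ρ m]
      rw [h1]
      exact smul_le hO (by positivity) (by positivity) (by
        rw [div_le_one hmpos]; exact hm1)
    calc (∑' k, ENNReal.ofReal (φ (‖x k‖ / (ρ * m))))
        ≤ ∑' k, ENNReal.ofReal (1 / m) * ENNReal.ofReal (φ (‖x k‖ / ρ)) :=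
          ENNReal.tsum_le_tsum hptw
      _ = ENNReal.ofReal (1 / m) * S := ENNReal.tsum_mul_left
      _ ≤ ENNReal.ofReal (1 / m) * ENNReal.ofReal m := by
          refine mul_le_mul_right ?_ _
          rw [← ENNReal.ofReal_toReal hS.ne]
          exact ENNReal.ofReal_le_ofReal (by simp [hm])
      _ = ENNReal.ofReal 1 := by
          rw [← ENNReal.ofReal_mul (by positivity), one_div, inv_mul_cancel₀ hmpos.ne']
      _ = 1 := ENNReal.ofReal_one
  exact lt_of_le_of_lt (luxNorm_le (by positivity) key) ENNReal.ofReal_lt_top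

lemma luxNorm_pos_of_ne_zero (hO : IsOrliczFunction φ) {k : ℕ} (hk : y k ≠ 0) :
    0 < luxNorm φ y := by
  obtain ⟨T, hT⟩ := (tendsto_atTop.mp hO.2.2.2.2 2).exists_forall_of_atTop
  set T' : ℝ := max T 1 with hT'
  have hT'pos : 0 < T' := lt_of_lt_of_le one_pos (le_max_right _ _)
  have hT'2 : ∀ t, T' ≤ t → 2 ≤ φ t := fun t ht => hT t ((le_max_left _ _).trans ht)
  have habs : 0 < ‖y k‖ := by
    simpa [AbsoluteValue.pos_iff] using hk
  have hle : ENNReal.ofReal (‖y k‖ / T') ≤ luxNorm φ y := by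
    refine le_sInf (fun p hp => ?_)
    obtain ⟨ρ, hρ, rfl, hmod⟩ := hp
    refine ENNReal.ofReal_le_ofReal ?_
    by_contra hcon
    push_neg at hcon
    have h2 : T' < ‖y k‖ / ρ := by
      rw [lt_div_iff₀ hρ]
      rw [lt_div_iff₀ hT'pos] at hcon
      linarith [hcon]
    have h3 : 2 ≤ φ (‖y k‖ / ρ) := hT'2 _ h2.le
    have h4 : (2 : ℝ≥0∞) ≤ ∑' m, ENNReal.ofReal (φ (‖y m‖ / ρ)) := by
      refine le_trans ?_ (ENNReal.le_tsum k)
      rw [show ((2:ℝ≥0∞)) = ENNReal.ofReal 2 by simp]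
      exact ENNReal.ofReal_le_ofReal h3
    have : (2 : ℝ≥0∞) ≤ 1 := h4.trans hmod
    norm_num at this
  refine lt_of_lt_of_le ?_ hle
  simp [ENNReal.ofReal_pos]
  positivity

lemma luxNorm_zero_of (hO : IsOrliczFunction φ) (h : ∀ k, y k = 0) : luxNorm φ y = 0 := by
  refine le_antisymm ?_ zero_le
  refine ENNReal.le_of_forall_pos_le_add (fun ε hε _ => ?_)
  have h1 : luxNorm φ y ≤ ENNReal.ofReal (ε : ℝ) := by
    refine luxNorm_le (by exact_mod_cast hε) ?_
    have : ∀ k, ENNReal.ofReal (φ (‖y k‖ / (ε:ℝ))) = 0 := by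
      intro k; simp [h k, hO.2.2.1]
    simp [this]
  simpa using h1

lemma ennreal_prod_rpow_const {n : ℕ} (a : ℝ≥0∞) (h0 : a ≠ 0) (hT : a ≠ ⊤) (θ : Fin n → ℝ) :
    ∏ j, a ^ θ j = a ^ (∑ j, θ j) := by
  induction (Finset.univ : Finset (Fin n)) using Finset.cons_induction with
  | empty => simp
  | cons j s hj ih =>
      rw [Finset.prod_cons, Finset.sum_cons, ENNReal.rpow_add _ _ h0 hT, ih]

lemma ennreal_le_of_forall_mul {a b : ℝ≥0∞} (hb : b ≠ ⊤)
    (h : ∀ ε : ℝ≥0∞, 1 < ε → ε ≠ ⊤ → a ≤ b * ε) : a ≤ b := by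
  refine ENNReal.le_of_forall_pos_le_add (fun ε hε _ => ?_)
  rcases eq_or_ne b 0 with rfl | hb0
  · simpa using (h 2 (by norm_num) (by norm_num)).trans (by simp)
  · have hεb : (ε : ℝ≥0∞) / b ≠ ⊤ := by
      simp [ENNReal.div_eq_top, hb0]
    have h1 : (1 : ℝ≥0∞) < 1 + ε / b :=
      ENNReal.lt_add_right ENNReal.one_ne_top
        (by simp [ENNReal.div_eq_zero_iff, hb, hε.ne'])
    have h2 := h _ h1 (by simp [hεb])
    calc a ≤ b * (1 + ε / b) := h2
      _ = b + b * (ε / b) := by rw [mul_add, mul_one]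
      _ = b + ε := by rw [ENNReal.mul_div_cancel hb0 hb]

section main

variable {n : ℕ} {φs : Fin n → ℝ → ℝ} {θ : Fin n → ℝ} {φz : ℝ → ℝ}

lemma young (hφ : ∀ j, IsOrliczFunction (φs j)) (hθpos : ∀ j, 0 < θ j)
    (hOz : IsOrliczFunction φz)
    (hinv : ∀ s : ℝ, 0 ≤ s → ginv φz s = ∏ j, ginv (φs j) s ^ θ j)
    (t : Fin n → ℝ) (ht : ∀ j, 0 ≤ t j) :
    φz (∏ j, t j ^ θ j) ≤ ∑ j, φs j (t j) := by
  set s := ∑ j, φs j (t j) with hsdef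
  have hs : 0 ≤ s := Finset.sum_nonneg fun j _ => (hφ j).2.2.2.1 _ (ht j)
  have hprod : (∏ j, t j ^ θ j) ≤ ∏ j, ginv (φs j) s ^ θ j := by
    refine Finset.prod_le_prod (fun j _ => Real.rpow_nonneg (ht j) _) (fun j _ => ?_)
    refine Real.rpow_le_rpow (ht j) ?_ (hθpos j).le
    exact le_ginv (hφ j) (ht j)
      (Finset.single_le_sum (fun i _ => (hφ i).2.2.2.1 _ (ht i)) (Finset.mem_univ j))
  rw [← hinv s hs] at hprod
  have h1 : φz (∏ j, t j ^ θ j) ≤ φz (ginv φz s) :=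
    hOz.2.1 (mem_Ici.mpr (Finset.prod_nonneg fun j _ => Real.rpow_nonneg (ht j) _))
      (mem_Ici.mpr (ginv_nonneg hOz hs)) hprod
  exact h1.trans (phi_ginv_le hOz hs)

lemma construct (hn : 0 < n) (hφ : ∀ j, IsOrliczFunction (φs j) ∧ IsNondegenerate (φs j))
    (hθpos : ∀ j, 0 < θ j) (hθsum : ∑ j, θ j = 1)
    (hOz : IsOrliczFunction φz) (_hNz : IsNondegenerate φz)
    (hinv : ∀ s : ℝ, 0 ≤ s → ginv φz s = ∏ j, ginv (φs j) s ^ θ j)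
    (x : ℕ → ℂ) (ρ : ℝ) (hρ : 0 < ρ) :
    ∃ xs : Fin n → ℕ → ℂ,
      (∀ k, ‖x k‖ = ∏ j, ‖xs j k‖ ^ θ j) ∧
      (∀ j, ∑' k, ENNReal.ofReal (φs j (‖xs j k‖ / ρ))
          ≤ ∑' k, ENNReal.ofReal (φz (‖x k‖ / ρ))) := by
  set u : ℕ → ℝ := fun k => ‖x k‖ / ρ with hu
  have hu0 : ∀ k, 0 ≤ u k := fun k => div_nonneg (norm_nonneg _) hρ.le
  set s : ℕ → ℝ := fun k => φz (u k) with hs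
  have hs0 : ∀ k, 0 ≤ s k := fun k => hOz.2.2.2.1 _ (hu0 k)
  set g : Fin n → ℕ → ℝ := fun j k => ginv (φs j) (s k) with hg
  have hg0 : ∀ j k, 0 ≤ g j k := fun j k => ginv_nonneg (hφ j).1 (hs0 k)
  set G : ℕ → ℝ := fun k => ginv φz (s k) with hG
  set t : Fin n → ℕ → ℝ := fun j k => (u k / G k) * g j k with ht
  have ht0 : ∀ j k, 0 ≤ t j k := by
    intro j k
    have hG0 : 0 ≤ G k := ginv_nonneg hOz (hs0 k)
    exact mul_nonneg (div_nonneg (hu0 k) hG0) (hg0 j k)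
  have habs : ∀ j k, ‖((ρ * t j k : ℝ) : ℂ)‖ = ρ * t j k := fun j k => by
    rw [Complex.norm_real, Real.norm_eq_abs, abs_of_nonneg (mul_nonneg hρ.le (ht0 j k))]
  have hbound : ∀ j k, φs j (t j k) ≤ s k := by
    intro j k
    rcases eq_or_lt_of_le (hu0 k) with h0 | hup
    · have : t j k = 0 := by
        show u k / G k * g j k = 0
        rw [← h0, zero_div, zero_mul]
      rw [this, (hφ j).1.2.2.1]; exact hs0 k
    · have huG : u k ≤ G k := le_ginv hOz (hu0 k) le_rfl
      have hGm : 0 < G k := lt_of_lt_of_le hup huG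
      have hlam0 : 0 ≤ u k / G k := div_nonneg (hu0 k) hGm.le
      have hlam1 : u k / G k ≤ 1 := (div_le_one hGm).mpr huG
      calc φs j ((u k / G k) * g j k) ≤ (u k / G k) * φs j (g j k) :=
            smul_le (hφ j).1 (hg0 j k) hlam0 hlam1
        _ ≤ 1 * s k := by
            have h1 : φs j (g j k) ≤ s k := phi_ginv_le (hφ j).1 (hs0 k)
            have h2 : 0 ≤ φs j (g j k) := (hφ j).1.2.2.2.1 _ (hg0 j k)
            nlinarith
        _ = s k := one_mul _
  refine ⟨fun j k => ((ρ * t j k : ℝ) : ℂ), fun m => ?_, fun j => ?_⟩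
  · rcases eq_or_lt_of_le (hu0 m) with h0 | hup
    · have hum : u m = 0 := h0.symm
      have hxm : ‖x m‖ = 0 := by
        have h2 : ‖x m‖ = u m * ρ := by
          show ‖x m‖ = ‖x m‖ / ρ * ρ
          field_simp
        rw [h2, hum, zero_mul]
      rw [hxm]
      refine (Finset.prod_eq_zero (Finset.mem_univ (⟨0, hn⟩ : Fin n)) ?_).symm
      have ht00 : t ⟨0, hn⟩ m = 0 := by
        show u m / G m * g ⟨0, hn⟩ m = 0
        rw [hum, zero_div, zero_mul]
      rw [habs, ht00, mul_zero, Real.zero_rpow (hθpos _).ne']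
    · have huG : u m ≤ G m := le_ginv hOz (hu0 m) le_rfl
      have hGm : 0 < G m := lt_of_lt_of_le hup huG
      have hρlam : 0 < ρ * (u m / G m) := mul_pos hρ (div_pos hup hGm)
      calc ‖x m‖ = ρ * u m := by
            rw [hu]; field_simp
        _ = (ρ * (u m / G m)) * G m := by field_simp
        _ = (ρ * (u m / G m)) * ∏ j, g j m ^ θ j := by
            have hGprod : G m = ∏ j, g j m ^ θ j := hinv (s m) (hs0 m)
            rw [hGprod]
        _ = (ρ * (u m / G m)) ^ (∑ j, θ j) * ∏ j, g j m ^ θ j := by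
            rw [hθsum, Real.rpow_one]
        _ = (∏ j, (ρ * (u m / G m)) ^ θ j) * ∏ j, g j m ^ θ j := by
            rw [Real.rpow_sum_of_pos hρlam]
        _ = ∏ j, ((ρ * (u m / G m)) ^ θ j * g j m ^ θ j) := by
            rw [Finset.prod_mul_distrib]
        _ = ∏ j, ‖((ρ * t j m : ℝ) : ℂ)‖ ^ θ j := by
            refine Finset.prod_congr rfl (fun j _ => ?_)
            rw [habs, ht]
            rw [← Real.mul_rpow hρlam.le (hg0 j m), mul_assoc]
  · refine ENNReal.tsum_le_tsum (fun k => ?_)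
    refine ENNReal.ofReal_le_ofReal ?_
    rw [habs, mul_div_cancel_left₀ _ hρ.ne']
    exact hbound j k

/-- The key modular estimate for a factorization. -/
lemma sum_modular (hn : 0 < n) (hφ : ∀ j, IsOrliczFunction (φs j))
    (hθpos : ∀ j, 0 < θ j)
    (hOz : IsOrliczFunction φz)
    (hinv : ∀ s : ℝ, 0 ≤ s → ginv φz s = ∏ j, ginv (φs j) s ^ θ j)
    (x : ℕ → ℂ) (xs : Fin n → ℕ → ℂ)
    (hfac : ∀ k, ‖x k‖ = ∏ j, ‖xs j k‖ ^ θ j)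
    (ρs : Fin n → ℝ) (hρs : ∀ j, 0 < ρs j) :
    (∑' k, ENNReal.ofReal (φz (‖x k‖ / ((n:ℝ) * ∏ j, ρs j ^ θ j))))
      ≤ ENNReal.ofReal (1 / (n:ℝ)) *
        ∑ j, ∑' k, ENNReal.ofReal (φs j (‖xs j k‖ / ρs j)) := by
  have hnR : (0:ℝ) < (n:ℝ) := by exact_mod_cast hn
  have hP : 0 < ∏ j, ρs j ^ θ j :=
    Finset.prod_pos (fun j _ => Real.rpow_pos_of_pos (hρs j) _)
  have hptw : ∀ k, ENNReal.ofReal (φz (‖x k‖ / ((n:ℝ) * ∏ j, ρs j ^ θ j)))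
      ≤ ENNReal.ofReal (1 / (n:ℝ)) *
        ∑ j, ENNReal.ofReal (φs j (‖xs j k‖ / ρs j)) := by
    intro k
    have hB0 : ∀ j, 0 ≤ ‖xs j k‖ / ρs j :=
      fun j => div_nonneg (norm_nonneg _) (hρs j).le
    have harg : ‖x k‖ / ((n:ℝ) * ∏ j, ρs j ^ θ j)
        = (1 / (n:ℝ)) * ∏ j, (‖xs j k‖ / ρs j) ^ θ j := by
      rw [hfac k]
      rw [show (∏ j, (‖xs j k‖ / ρs j) ^ θ j)
          = (∏ j, ‖xs j k‖ ^ θ j) / ∏ j, ρs j ^ θ j by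
        rw [← Finset.prod_div_distrib]
        exact Finset.prod_congr rfl fun j _ =>
          Real.div_rpow (norm_nonneg _) (hρs j).le (θ j)]
      rw [one_div, inv_mul_eq_div, div_div]
      ring
    rw [harg]
    have h1 : φz ((1 / (n:ℝ)) * ∏ j, (‖xs j k‖ / ρs j) ^ θ j)
        ≤ (1 / (n:ℝ)) * φz (∏ j, (‖xs j k‖ / ρs j) ^ θ j) := by
      refine smul_le hOz (Finset.prod_nonneg fun j _ => Real.rpow_nonneg (hB0 j) _)
        (by positivity) ?_
      rw [div_le_one hnR]
      exact_mod_cast hn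
    have h2 : φz (∏ j, (‖xs j k‖ / ρs j) ^ θ j)
        ≤ ∑ j, φs j (‖xs j k‖ / ρs j) :=
      young hφ hθpos hOz hinv _ hB0
    calc ENNReal.ofReal (φz ((1 / (n:ℝ)) * ∏ j, (‖xs j k‖ / ρs j) ^ θ j))
        ≤ ENNReal.ofReal ((1 / (n:ℝ)) * ∑ j, φs j (‖xs j k‖ / ρs j)) := by
          refine ENNReal.ofReal_le_ofReal (h1.trans ?_)
          exact mul_le_mul_of_nonneg_left h2 (by positivity)
      _ = ENNReal.ofReal (1 / (n:ℝ)) *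
            ∑ j, ENNReal.ofReal (φs j (‖xs j k‖ / ρs j)) := by
          rw [ENNReal.ofReal_mul (by positivity),
            ENNReal.ofReal_sum_of_nonneg (fun j _ => (hφ j).2.2.2.1 _ (hB0 j))]
  calc (∑' k, ENNReal.ofReal (φz (‖x k‖ / ((n:ℝ) * ∏ j, ρs j ^ θ j))))
      ≤ ∑' k, ENNReal.ofReal (1 / (n:ℝ)) *
          ∑ j, ENNReal.ofReal (φs j (‖xs j k‖ / ρs j)) :=
        ENNReal.tsum_le_tsum hptw
    _ = ENNReal.ofReal (1 / (n:ℝ)) *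
          ∑' k, ∑ j, ENNReal.ofReal (φs j (‖xs j k‖ / ρs j)) :=
        ENNReal.tsum_mul_left
    _ = ENNReal.ofReal (1 / (n:ℝ)) *
          ∑ j, ∑' k, ENNReal.ofReal (φs j (‖xs j k‖ / ρs j)) := by
        rw [Summable.tsum_finsetSum (fun j _ => ENNReal.summable)]

end main
end LozAux

/-- Lozanovskii-type factorization: if `φ_z⁻¹ = ∏_j (φ_j⁻¹)^{θ_j}` with `θ_j > 0`,
`∑ θ_j = 1`, then the set of products `{x : |x| = ∏ |x_j|^{θ_j}, x_j ∈ ℓ_{φ_j}}`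
equals `ℓ_{φ_z}`, and the Luxemburg norm of `x ∈ ℓ_{φ_z}` is equivalent (with constant
depending only on `n`) to the infimum of `∏_j ‖x_j‖^{θ_j}` over factorizations. -/
theorem statement8 (n : ℕ) (hn : 0 < n) (φ : Fin n → ℝ → ℝ)
    (hφ : ∀ j, IsOrliczFunction (φ j) ∧ IsNondegenerate (φ j))
    (θ : Fin n → ℝ) (hθpos : ∀ j, 0 < θ j) (hθsum : ∑ j, θ j = 1)
    (φz : ℝ → ℝ) (hφz : IsOrliczFunction φz ∧ IsNondegenerate φz)
    (hinv : ∀ s : ℝ, 0 ≤ s → ginv φz s = ∏ j, ginv (φ j) s ^ θ j) :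
    ({x : ℕ → ℂ | ∃ xs : Fin n → (ℕ → ℂ), (∀ j, MemOrlicz (φ j) (xs j)) ∧
        ∀ k : ℕ, ‖x k‖ = ∏ j, ‖xs j k‖ ^ θ j}
      = {x : ℕ → ℂ | MemOrlicz φz x}) ∧
    ∃ C : ℝ≥0∞, 0 < C ∧ C ≠ ⊤ ∧ ∀ x : ℕ → ℂ, MemOrlicz φz x →
      sInf (factorizationSet φ θ x) ≤ luxNorm φz x ∧
      luxNorm φz x ≤ C * sInf (factorizationSet φ θ x) := by
  obtain ⟨hOz, hNz⟩ := hφz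
  have hOj : ∀ j, IsOrliczFunction (φ j) := fun j => (hφ j).1
  have hnR : (0:ℝ) < (n:ℝ) := by exact_mod_cast hn
  have hconstructAt : ∀ (x : ℕ → ℂ) (ρ : ℝ), 0 < ρ →
      ∃ xs : Fin n → ℕ → ℂ,
        (∀ k, ‖x k‖ = ∏ j, ‖xs j k‖ ^ θ j) ∧
        (∀ j, ∑' k, ENNReal.ofReal (φ j (‖xs j k‖ / ρ))
            ≤ ∑' k, ENNReal.ofReal (φz (‖x k‖ / ρ))) :=
    fun x ρ hρ => LozAux.construct hn hφ hθpos hθsum hOz hNz hinv x ρ hρ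
  constructor
  · ext x
    simp only [Set.mem_setOf_eq]
    constructor
    · rintro ⟨xs, hmem, hfac⟩
      choose ρs hρs hmod using hmem
      refine ⟨(n:ℝ) * ∏ j, ρs j ^ θ j,
        mul_pos hnR (Finset.prod_pos fun j _ => Real.rpow_pos_of_pos (hρs j) _), ?_⟩
      refine lt_of_le_of_lt (LozAux.sum_modular hn hOj hθpos hOz hinv x xs hfac ρs hρs) ?_
      exact ENNReal.mul_lt_top ENNReal.ofReal_lt_top
        (ENNReal.sum_lt_top.mpr (fun j _ => hmod j))
    · rintro ⟨ρ, hρ, hS⟩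
      obtain ⟨xs, hfac, hmod⟩ := hconstructAt x ρ hρ
      exact ⟨xs, fun j => ⟨ρ, hρ, lt_of_le_of_lt (hmod j) hS⟩, hfac⟩
  · refine ⟨(n : ℝ≥0∞), by exact_mod_cast hn, ENNReal.natCast_ne_top n, fun x hx => ?_⟩
    have ha : sInf (factorizationSet φ θ x) ≤ luxNorm φz x := by
      refine le_sInf (fun p hp => ?_)
      obtain ⟨ρ, hρ, rfl, hmod⟩ := hp
      obtain ⟨xs, hfac, hmodj⟩ := hconstructAt x ρ hρ
      have hmemj : ∀ j, MemOrlicz (φ j) (xs j) :=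
        fun j => ⟨ρ, hρ, lt_of_le_of_lt ((hmodj j).trans hmod) ENNReal.one_lt_top⟩
      have hc : (∏ j, luxNorm (φ j) (xs j) ^ θ j) ∈ factorizationSet φ θ x :=
        ⟨xs, hmemj, hfac, rfl⟩
      refine (sInf_le hc).trans ?_
      have hlj : ∀ j, luxNorm (φ j) (xs j) ≤ ENNReal.ofReal ρ :=
        fun j => LozAux.luxNorm_le hρ ((hmodj j).trans hmod)
      calc (∏ j, luxNorm (φ j) (xs j) ^ θ j) ≤ ∏ j, (ENNReal.ofReal ρ) ^ θ j :=
            Finset.prod_le_prod' (fun j _ => ENNReal.rpow_le_rpow (hlj j) (hθpos j).le)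
        _ = (ENNReal.ofReal ρ) ^ (∑ j, θ j) :=
            LozAux.ennreal_prod_rpow_const _
              (by simp [ENNReal.ofReal_eq_zero]; linarith) ENNReal.ofReal_ne_top θ
        _ = ENNReal.ofReal ρ := by rw [hθsum, ENNReal.rpow_one]
    refine ⟨ha, ?_⟩
    have key : ∀ c ∈ factorizationSet φ θ x, luxNorm φz x ≤ (n : ℝ≥0∞) * c := by
      rintro c ⟨xs, hmem, hfac, rfl⟩
      by_cases h0 : ∃ j, luxNorm (φ j) (xs j) = 0
      · obtain ⟨j0, hj0⟩ := h0
        have hxs0 : ∀ k, xs j0 k = 0 := by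
          intro k; by_contra hk
          exact absurd hj0 (LozAux.luxNorm_pos_of_ne_zero (hOj j0) hk).ne'
        have hx0 : ∀ k, x k = 0 := by
          intro k
          have habs0 : ‖x k‖ = 0 := by
            rw [hfac k]
            refine Finset.prod_eq_zero (Finset.mem_univ j0) ?_
            rw [hxs0 k]
            simp [Real.zero_rpow (hθpos j0).ne']
          simpa using habs0
        rw [LozAux.luxNorm_zero_of hOz hx0]
        exact zero_le
      · push_neg at h0
        have hjtop : ∀ j, luxNorm (φ j) (xs j) ≠ ⊤ :=
          fun j => (LozAux.luxNorm_lt_top (hOj j) (hmem j)).ne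
        have hcT : (∏ j, luxNorm (φ j) (xs j) ^ θ j) ≠ ⊤ :=
          (ENNReal.prod_lt_top (fun j _ =>
            (ENNReal.rpow_ne_top_of_nonneg (hθpos j).le (hjtop j)).lt_top)).ne
        refine LozAux.ennreal_le_of_forall_mul
          (ENNReal.mul_ne_top (ENNReal.natCast_ne_top n) hcT) (fun ε hε1 hεT => ?_)
        have hε0 : ε ≠ 0 := by
          intro h; rw [h] at hε1; exact absurd hε1 (by norm_num)
        have hpick : ∀ j, ∃ ρ : ℝ, 0 < ρ ∧
            (∑' k, ENNReal.ofReal (φ j (‖xs j k‖ / ρ))) ≤ 1 ∧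
            ENNReal.ofReal ρ ≤ luxNorm (φ j) (xs j) * ε := by
          intro j
          have hlt : luxNorm (φ j) (xs j) < luxNorm (φ j) (xs j) * ε := by
            conv_lhs => rw [← mul_one (luxNorm (φ j) (xs j))]
            exact ENNReal.mul_lt_mul_right (h0 j) (hjtop j) hε1
          obtain ⟨p, hp, hplt⟩ := sInf_lt_iff.mp hlt
          obtain ⟨ρ, hρ, rfl, hmodρ⟩ := hp
          exact ⟨ρ, hρ, hmodρ, hplt.le⟩
        choose ρs hρs hmods hρsle using hpick
        have hmodx : (∑' k, ENNReal.ofReal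
            (φz (‖x k‖ / ((n:ℝ) * ∏ j, ρs j ^ θ j)))) ≤ 1 := by
          refine (LozAux.sum_modular hn hOj hθpos hOz hinv x xs hfac ρs hρs).trans ?_
          calc ENNReal.ofReal (1/(n:ℝ)) *
                ∑ j, ∑' k, ENNReal.ofReal (φ j (‖xs j k‖ / ρs j))
              ≤ ENNReal.ofReal (1/(n:ℝ)) * ∑ (_j : Fin n), 1 :=
                mul_le_mul_right (Finset.sum_le_sum (fun j _ => hmods j)) _
            _ = 1 := by
                rw [Finset.sum_const, Finset.card_univ, Fintype.card_fin, nsmul_eq_mul, mul_one]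
                rw [show ((n:ℝ≥0∞)) = ENNReal.ofReal (n:ℝ) by simp]
                rw [← ENNReal.ofReal_mul (by positivity)]
                rw [one_div, inv_mul_cancel₀ hnR.ne', ENNReal.ofReal_one]
        have hlux : luxNorm φz x ≤ ENNReal.ofReal ((n:ℝ) * ∏ j, ρs j ^ θ j) :=
          LozAux.luxNorm_le
            (mul_pos hnR (Finset.prod_pos fun j _ => Real.rpow_pos_of_pos (hρs j) _)) hmodx
        refine hlux.trans ?_
        calc ENNReal.ofReal ((n:ℝ) * ∏ j, ρs j ^ θ j)
            = (n : ℝ≥0∞) * ∏ j, (ENNReal.ofReal (ρs j)) ^ θ j := by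
              rw [ENNReal.ofReal_mul hnR.le,
                ENNReal.ofReal_prod_of_nonneg (fun j _ => Real.rpow_nonneg (hρs j).le _)]
              congr 1
              · simp
              · exact Finset.prod_congr rfl fun j _ => (ENNReal.ofReal_rpow_of_pos (hρs j)).symm
          _ ≤ (n : ℝ≥0∞) * ∏ j, (luxNorm (φ j) (xs j) * ε) ^ θ j := by
              refine mul_le_mul_right (Finset.prod_le_prod' fun j _ => ?_) _
              exact ENNReal.rpow_le_rpow (hρsle j) (hθpos j).le
          _ = (n : ℝ≥0∞) * ((∏ j, luxNorm (φ j) (xs j) ^ θ j) * ε) := by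
              congr 1
              rw [show (∏ j, (luxNorm (φ j) (xs j) * ε) ^ θ j)
                  = ∏ j, (luxNorm (φ j) (xs j)) ^ θ j * ε ^ θ j from
                Finset.prod_congr rfl fun j _ =>
                  ENNReal.mul_rpow_of_ne_top (hjtop j) hεT _]
              rw [Finset.prod_mul_distrib, LozAux.ennreal_prod_rpow_const ε hε0 hεT, hθsum,
                ENNReal.rpow_one]
          _ = (n : ℝ≥0∞) * (∏ j, luxNorm (φ j) (xs j) ^ θ j) * ε := by ring
    rcases eq_or_ne (sInf (factorizationSet φ θ x)) ⊤ with htop | htop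
    · rw [htop, ENNReal.mul_top (by exact_mod_cast hn.ne')]
      exact le_top
    rcases eq_or_ne (sInf (factorizationSet φ θ x)) 0 with hzero | hzero
    · have hlux0 : luxNorm φz x ≤ 0 := by
        refine ENNReal.le_of_forall_pos_le_add (fun δ hδ _ => ?_)
        have hδ0 : ((δ : ℝ≥0∞) : ℝ≥0∞) ≠ 0 := by exact_mod_cast hδ.ne'
        have hδC : (0:ℝ≥0∞) < (δ : ℝ≥0∞) / (n:ℝ≥0∞) :=
          ENNReal.div_pos hδ0 (ENNReal.natCast_ne_top n)
        have hlt : sInf (factorizationSet φ θ x) < (δ : ℝ≥0∞) / (n:ℝ≥0∞) := by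
          rw [hzero]; exact hδC
        obtain ⟨c, hc, hclt⟩ := sInf_lt_iff.mp hlt
        have hn0 : (n:ℝ≥0∞) ≠ 0 := by exact_mod_cast hn.ne'
        calc luxNorm φz x ≤ (n:ℝ≥0∞) * c := key c hc
          _ ≤ (n:ℝ≥0∞) * ((δ : ℝ≥0∞) / (n:ℝ≥0∞)) := mul_le_mul_right hclt.le _
          _ = (δ : ℝ≥0∞) := ENNReal.mul_div_cancel hn0 (ENNReal.natCast_ne_top n)
          _ = 0 + (δ : ℝ≥0∞) := (zero_add _).symm
      exact hlux0.trans zero_le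
    · refine LozAux.ennreal_le_of_forall_mul
        (ENNReal.mul_ne_top (ENNReal.natCast_ne_top n) htop) (fun ε hε1 hεT => ?_)
      have hlt : sInf (factorizationSet φ θ x) < sInf (factorizationSet φ θ x) * ε := by
        conv_lhs => rw [← mul_one (sInf (factorizationSet φ θ x))]
        exact ENNReal.mul_lt_mul_right hzero htop hε1
      obtain ⟨c, hc, hclt⟩ := sInf_lt_iff.mp hlt
      calc luxNorm φz x ≤ (n:ℝ≥0∞) * c := key c hc
        _ ≤ (n:ℝ≥0∞) * (sInf (factorizationSet φ θ x) * ε) := mul_le_mul_right hclt.le _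
        _ = (n:ℝ≥0∞) * sInf (factorizationSet φ θ x) * ε := by rw [mul_assoc]


end
end

section
/- Let {φ_w}_{w∈𝕋} be a family of N-functions such that w ↦ φ_w(t) is Borel for every t ≥ 0, and suppose there is t' > 0 such that for every s ∈ (0,t') the functions w ↦ log φ_w^{-1}(s) and w ↦ log (φ_w^*)^{-1}(s) are integrable on 𝕋. Fix z = re^{iθ} in the open unit disk and let φ_z be an N-function satisfying φ_z^{-1}(s) = exp((1/2π)∫_{−π}^{π} P(r, θ−u) log φ_{e^{iu}}^{-1}(s) du) for all s ∈ (0,t'). Then for every s ∈ (0,t'): (φ_z^*)^{-1}(s) ≤ 2·exp((1/2π)∫_{−π}^{π} P(r, θ−u) log (φ_{e^{iu}}^*)^{-1}(s) du). -/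
open MeasureTheory Real Set Filter
open scoped ENNReal

noncomputable section

/-- An N-function: a nondegenerate Orlicz function with `φ(t)/t → 0` as `t → 0⁺` and
`φ(t)/t → ∞` as `t → ∞`. -/
def IsNFunction (φ : ℝ → ℝ) : Prop :=
  IsOrliczFunction φ ∧ IsNondegenerate φ ∧
    Filter.Tendsto (fun t => φ t / t) (nhdsWithin 0 (Set.Ioi 0)) (nhds 0) ∧
    Filter.Tendsto (fun t => φ t / t) Filter.atTop Filter.atTop

/-- The conjugate (Legendre–Young) function `φ*(y) = sup{xy - φ(x) : 0 < x < ∞}`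
(real-valued; finite for N-functions). -/
def youngConj (φ : ℝ → ℝ) (y : ℝ) : ℝ :=
  sSup {z : ℝ | ∃ x : ℝ, 0 < x ∧ z = x * y - φ x}

namespace S10

variable {φ : ℝ → ℝ} {s : ℝ}

lemma nf_zero (h : IsNFunction φ) : φ 0 = 0 := h.1.2.2.1
lemma nf_nonneg (h : IsNFunction φ) {t : ℝ} (ht : 0 ≤ t) : 0 ≤ φ t := h.1.2.2.2.1 t ht
lemma nf_convex (h : IsNFunction φ) : ConvexOn ℝ (Set.Ici 0) φ := h.1.1
lemma nf_tendsto (h : IsNFunction φ) : Tendsto φ atTop atTop := h.1.2.2.2.2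
lemma nf_ratio_top (h : IsNFunction φ) : Tendsto (fun t => φ t / t) atTop atTop := h.2.2.2

lemma nf_continuousAt (h : IsNFunction φ) {x : ℝ} (hx : 0 < x) : ContinuousAt φ x := by
  have hconv : ConvexOn ℝ (Set.Ioi 0) φ :=
    (nf_convex h).subset Ioi_subset_Ici_self (convex_Ioi 0)
  exact (hconv.continuousOn isOpen_Ioi).continuousAt (isOpen_Ioi.mem_nhds hx)

lemma conjSet_nonempty (y : ℝ) :
    {z : ℝ | ∃ x : ℝ, 0 < x ∧ z = x * y - φ x}.Nonempty :=
  ⟨1 * y - φ 1, 1, one_pos, rfl⟩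

lemma conj_bddAbove (h : IsNFunction φ) (y : ℝ) :
    BddAbove {z : ℝ | ∃ x : ℝ, 0 < x ∧ z = x * y - φ x} := by
  obtain ⟨M, hM⟩ := eventually_atTop.1 ((nf_ratio_top h).eventually_ge_atTop (|y| + 1))
  refine ⟨max (max M 1 * |y|) 0, ?_⟩
  rintro z ⟨x, hx, rfl⟩
  rcases le_total x (max M 1) with hxM | hxM
  · have h1 : x * y ≤ max M 1 * |y| := by
      calc x * y ≤ x * |y| := by nlinarith [le_abs_self y]
        _ ≤ max M 1 * |y| := by nlinarith [abs_nonneg y]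
    have := nf_nonneg h hx.le
    have := le_max_left (max M 1 * |y|) 0
    simp only [le_max_iff]
    left; linarith
  · have hxM' : M ≤ x := le_trans (le_max_left _ _) hxM
    have h1 : |y| + 1 ≤ φ x / x := hM x hxM'
    have h2 : (|y| + 1) * x ≤ φ x := by
      rw [← le_div_iff₀ hx] at *; linarith
    have h3 : x * y ≤ x * |y| := by nlinarith [le_abs_self y]
    simp only [le_max_iff]
    right; nlinarith

lemma le_conj (h : IsNFunction φ) {x : ℝ} (hx : 0 < x) (y : ℝ) :
    x * y - φ x ≤ youngConj φ y :=
  le_csSup (conj_bddAbove h y) ⟨x, hx, rfl⟩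

lemma conj_convexOn (h : IsNFunction φ) : ConvexOn ℝ Set.univ (youngConj φ) := by
  refine ⟨convex_univ, fun y₁ _ y₂ _ a b ha hb hab => ?_⟩
  refine csSup_le (conjSet_nonempty _) ?_
  rintro z ⟨x, hx, rfl⟩
  have h1 := le_conj h hx y₁
  have h2 := le_conj h hx y₂
  have key : x * (a • y₁ + b • y₂) - φ x = a * (x * y₁ - φ x) + b * (x * y₂ - φ x) := by
    simp only [smul_eq_mul]
    linear_combination (φ x) * hab
  rw [key]
  simp only [smul_eq_mul]
  have := mul_le_mul_of_nonneg_left h1 ha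
  have := mul_le_mul_of_nonneg_left h2 hb
  linarith

lemma conj_continuousAt (h : IsNFunction φ) (y : ℝ) : ContinuousAt (youngConj φ) y := by
  have := (conj_convexOn h).continuousOn isOpen_univ
  exact this.continuousAt (Filter.univ_mem)

lemma conj_atTop (h : IsNFunction φ) : Tendsto (youngConj φ) atTop atTop := by
  refine tendsto_atTop_mono (fun y => le_conj h one_pos y) ?_
  simp only [one_mul]
  exact tendsto_atTop_add_const_right _ _ tendsto_id

lemma conj_small (h : IsNFunction φ) (hs : 0 < s) :
    ∃ y : ℝ, 0 < y ∧ youngConj φ y ≤ s := by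
  obtain ⟨M, hM⟩ := eventually_atTop.1 ((nf_ratio_top h).eventually_ge_atTop 1)
  set M' := max M 1 with hM'def
  have hM'pos : (0:ℝ) < M' := lt_of_lt_of_le one_pos (le_max_right _ _)
  refine ⟨min 1 (s / M'), lt_min one_pos (div_pos hs hM'pos), ?_⟩
  refine csSup_le (conjSet_nonempty _) ?_
  rintro z ⟨x, hx, rfl⟩
  rcases le_total x M' with hxM | hxM
  · have h1 : x * min 1 (s / M') ≤ M' * (s / M') := by
      apply mul_le_mul hxM (min_le_right _ _) (le_min zero_le_one (div_pos hs hM'pos).le) hM'pos.le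
    have h2 : M' * (s / M') = s := by field_simp
    have := nf_nonneg h hx.le
    linarith
  · have h1 : (1:ℝ) ≤ φ x / x := hM x (le_trans (le_max_left _ _) hxM)
    have h2 : 1 * x ≤ φ x := (le_div_iff₀ hx).1 h1
    have h3 : x * min 1 (s / M') ≤ x * 1 :=
      mul_le_mul_of_nonneg_left (min_le_left _ _) hx.le
    nlinarith

lemma nf_small (h : IsNFunction φ) (hs : 0 < s) : ∃ t : ℝ, 0 < t ∧ φ t ≤ s := by
  have h1 : ∀ᶠ t in nhdsWithin 0 (Set.Ioi 0), φ t / t < s :=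
    h.2.2.1.eventually (gt_mem_nhds hs)
  have h2 : ∀ᶠ t in nhdsWithin 0 (Set.Ioi 0), t ∈ Set.Ioo (0:ℝ) 1 :=
    Ioo_mem_nhdsGT_of_mem (by constructor <;> norm_num)
  obtain ⟨t, ht1, ht2⟩ := (h1.and h2).exists
  refine ⟨t, ht2.1, ?_⟩
  have := (div_lt_iff₀ ht2.1).1 ht1
  nlinarith [ht2.2]

lemma ginv_bddAbove (htop : Tendsto φ atTop atTop) (s : ℝ) :
    BddAbove {t : ℝ | 0 ≤ t ∧ φ t ≤ s} := by
  obtain ⟨M, hM⟩ := eventually_atTop.1 (htop.eventually_gt_atTop s)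
  refine ⟨M, fun t ht => ?_⟩
  by_contra hlt
  push_neg at hlt
  exact absurd ht.2 (not_le.mpr (hM t hlt.le))

lemma ginv_spec (ψ : ℝ → ℝ) {s : ℝ}
    (hc : ∀ x : ℝ, 0 < x → ContinuousAt ψ x)
    (htop : Tendsto ψ atTop atTop)
    (hex : ∃ t : ℝ, 0 < t ∧ ψ t ≤ s) :
    0 < ginv ψ s ∧ ψ (ginv ψ s) ≤ s ∧ s ≤ ψ (ginv ψ s) := by
  obtain ⟨t₀, ht₀, ht₀s⟩ := hex
  have hne : {t : ℝ | 0 ≤ t ∧ ψ t ≤ s}.Nonempty := ⟨t₀, ht₀.le, ht₀s⟩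
  have hbdd := ginv_bddAbove htop s
  have ha : t₀ ≤ ginv ψ s := le_csSup hbdd ⟨ht₀.le, ht₀s⟩
  have hapos : 0 < ginv ψ s := lt_of_lt_of_le ht₀ ha
  set a := ginv ψ s with hadef
  have hca := hc a hapos
  refine ⟨hapos, ?_, ?_⟩
  · by_contra hgt
    push_neg at hgt
    have hev : ∀ᶠ t in nhds a, s < ψ t := hca.eventually (lt_mem_nhds hgt)
    obtain ⟨ε, hε, hball⟩ := Metric.eventually_nhds_iff.1 hev
    obtain ⟨t, htS, htlt⟩ := exists_lt_of_lt_csSup hne (show a - ε < a by linarith)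
    have hta : t ≤ a := le_csSup hbdd htS
    have : s < ψ t := hball (by rw [Real.dist_eq]; rw [abs_lt]; constructor <;> linarith)
    exact absurd htS.2 (not_le.mpr this)
  · by_contra hgt
    push_neg at hgt
    have hev : ∀ᶠ t in nhds a, ψ t < s := hca.eventually (gt_mem_nhds hgt)
    obtain ⟨ε, hε, hball⟩ := Metric.eventually_nhds_iff.1 hev
    have hmem : a + ε / 2 ∈ {t : ℝ | 0 ≤ t ∧ ψ t ≤ s} := by
      refine ⟨by linarith, (hball ?_).le⟩
      rw [Real.dist_eq, abs_lt]; constructor <;> linarith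
    have h5 : a + ε / 2 ≤ a := le_csSup hbdd hmem
    linarith

lemma nf_ginv (h : IsNFunction φ) (hs : 0 < s) :
    0 < ginv φ s ∧ φ (ginv φ s) ≤ s ∧ s ≤ φ (ginv φ s) :=
  ginv_spec φ (fun _ hx => nf_continuousAt h hx) (nf_tendsto h) (nf_small h hs)

lemma conj_ginv (h : IsNFunction φ) (hs : 0 < s) :
    0 < ginv (youngConj φ) s ∧ youngConj φ (ginv (youngConj φ) s) ≤ s := by
  have := ginv_spec (youngConj φ) (fun x _ => conj_continuousAt h x)
    (conj_atTop h) (conj_small h hs)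
  exact ⟨this.1, this.2.1⟩

lemma lower_bound (h : IsNFunction φ) (hs : 0 < s) :
    s ≤ ginv φ s * ginv (youngConj φ) s := by
  obtain ⟨ha, hle, hge⟩ := nf_ginv h hs
  set a := ginv φ s with hadef
  have hconj : youngConj φ (s / a) ≤ s := by
    refine csSup_le (conjSet_nonempty _) ?_
    rintro z ⟨x, hx, rfl⟩
    rcases le_total x a with hxa | hxa
    · have h1 : x * (s / a) ≤ a * (s / a) := by
        apply mul_le_mul_of_nonneg_right hxa (by positivity)
      have h2 : a * (s / a) = s := by field_simp
      have := nf_nonneg h hx.le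
      linarith
    · -- a ≤ x : use convexity to get φ a ≤ (a/x) φ x
      have hcx : φ a ≤ a / x * φ x := by
        have h2 := (nf_convex h).2 (show x ∈ Set.Ici (0:ℝ) from hx.le)
          (show (0:ℝ) ∈ Set.Ici (0:ℝ) from Set.self_mem_Ici)
          (show (0:ℝ) ≤ a / x by positivity)
          (show (0:ℝ) ≤ 1 - a / x by
            have : a / x ≤ 1 := (div_le_one hx).mpr hxa
            linarith)
          (by ring)
        simp only [smul_eq_mul, mul_zero, add_zero, nf_zero h] at h2
        rwa [div_mul_cancel₀ _ (ne_of_gt hx)] at h2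
      -- then x*(s/a) - φ x ≤ s
      have hd : x * (s / a) = x * s / a := by ring
      rw [hd]
      have h4 : φ a * x ≤ a * φ x := by
        rw [div_mul_eq_mul_div, le_div_iff₀ hx] at hcx
        linarith
      rw [div_sub' (ne_of_gt ha), div_le_iff₀ ha]
      nlinarith [mul_le_mul_of_nonneg_left hge hx.le, mul_nonneg hs.le ha.le]
  have hmem : s / a ∈ {t : ℝ | 0 ≤ t ∧ youngConj φ t ≤ s} := ⟨by positivity, hconj⟩
  have hb : s / a ≤ ginv (youngConj φ) s := le_csSup (ginv_bddAbove (conj_atTop h) s) hmem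
  calc s = a * (s / a) := by field_simp
    _ ≤ a * ginv (youngConj φ) s := mul_le_mul_of_nonneg_left hb ha.le

variable {r : ℝ}

variable {r : ℝ}

lemma den_pos (hr0 : 0 ≤ r) (hr1 : r < 1) (t : ℝ) :
    0 < 1 - 2 * r * Real.cos t + r ^ 2 := by
  have h1 : 0 < (1 - r) ^ 2 := pow_pos (by linarith) 2
  nlinarith [Real.cos_le_one t, mul_nonneg hr0 (sub_nonneg.2 (Real.cos_le_one t))]

lemma den2_pos (hr0 : 0 ≤ r) (hr1 : r < 1) (t : ℝ) : 0 < 1 - r * Real.cos t := by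
  have h1 : r * Real.cos t ≤ r * 1 := mul_le_mul_of_nonneg_left (Real.cos_le_one t) hr0
  linarith

lemma poisson_nonneg (hr0 : 0 ≤ r) (hr1 : r < 1) (t : ℝ) : 0 ≤ poissonKernelRT r t := by
  apply div_nonneg (by nlinarith) (den_pos hr0 hr1 t).le

lemma hasDerivAt_F (hr0 : 0 ≤ r) (hr1 : r < 1) (t : ℝ) :
    HasDerivAt (fun t => t + 2 * Real.arctan (r * Real.sin t / (1 - r * Real.cos t)))
      (poissonKernelRT r t) t := by
  have hden := den2_pos hr0 hr1 t
  have hQ := den_pos hr0 hr1 t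
  have hnum : HasDerivAt (fun t => r * Real.sin t) (r * Real.cos t) t :=
    (Real.hasDerivAt_sin t).const_mul r
  have hdenom : HasDerivAt (fun t => 1 - r * Real.cos t) (-(r * -Real.sin t)) t :=
    ((Real.hasDerivAt_cos t).const_mul r).const_sub 1
  have hg := hnum.div hdenom hden.ne'
  have harc := hg.arctan
  have H := (hasDerivAt_id t).add (harc.const_mul 2)
  refine H.congr_deriv ?_
  symm
  have hss := Real.sin_sq_add_cos_sq t
  have hg2 : 0 < 1 + (r * Real.sin t / (1 - r * Real.cos t)) ^ 2 := by positivity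
  simp only [poissonKernelRT, Pi.div_apply]
  rw [div_eq_iff hQ.ne']
  field_simp
  ring_nf
  have hsin : Real.sin t ^ 2 = 1 - Real.cos t ^ 2 := by linarith
  simp only [hsin]
  ring

lemma poisson_cont (hr0 : 0 ≤ r) (hr1 : r < 1) (θ : ℝ) :
    Continuous fun u : ℝ => poissonKernelRT r (θ - u) := by
  apply Continuous.div
  · continuity
  · continuity
  · exact fun u => (den_pos hr0 hr1 (θ - u)).ne'

lemma integral_poisson (hr0 : 0 ≤ r) (hr1 : r < 1) (θ : ℝ) :
    ∫ u in (-π)..π, poissonKernelRT r (θ - u) = 2 * π := by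
  have hcont := poisson_cont hr0 hr1 θ
  have hF : ∀ u ∈ uIcc (-π) π,
      HasDerivAt (fun u : ℝ =>
        -((θ - u) + 2 * Real.arctan (r * Real.sin (θ - u) / (1 - r * Real.cos (θ - u)))))
        (poissonKernelRT r (θ - u)) u := by
    intro u _
    have h2 : HasDerivAt (fun u : ℝ => θ - u) (-1) u := (hasDerivAt_id u).const_sub θ
    have h3 := ((hasDerivAt_F hr0 hr1 (θ - u)).comp u h2).neg
    refine h3.congr_deriv ?_
    ring
  rw [intervalIntegral.integral_eq_sub_of_hasDerivAt hF (hcont.intervalIntegrable _ _)]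
  have e1 : θ - -π = θ + π := by ring
  rw [e1, Real.sin_sub_pi, Real.cos_sub_pi, Real.sin_add_pi, Real.cos_add_pi]
  ring


end S10

/-- Duality estimate for the interpolated Orlicz function: if
`φ_z⁻¹(s) = exp((1/2π)∫ P(r,θ-u) log φ_{e^{iu}}⁻¹(s) du)` on `(0,t')`, then
`(φ_z^*)⁻¹(s) ≤ 2 exp((1/2π)∫ P(r,θ-u) log (φ_{e^{iu}}^*)⁻¹(s) du)` on `(0,t')`. -/
theorem statement10 (φ : ℝ → ℝ → ℝ)
    (hN : ∀ w : ℝ, IsNFunction (φ w))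
    (hper : ∀ t : ℝ, Function.Periodic (fun w => φ w t) (2 * π))
    (hborel : ∀ t : ℝ, 0 ≤ t → Measurable fun w => φ w t)
    (t' : ℝ) (ht' : 0 < t')
    (hint : ∀ s ∈ Set.Ioo (0 : ℝ) t',
      IntervalIntegrable (fun w => Real.log (ginv (φ w) s)) volume (-π) π)
    (hint' : ∀ s ∈ Set.Ioo (0 : ℝ) t',
      IntervalIntegrable (fun w => Real.log (ginv (youngConj (φ w)) s)) volume (-π) π)
    (r θ : ℝ) (hr0 : 0 ≤ r) (hr1 : r < 1)
    (φz : ℝ → ℝ) (hφz : IsNFunction φz)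
    (hinv : ∀ s ∈ Set.Ioo (0 : ℝ) t', ginv φz s = Real.exp ((1 / (2 * π)) *
      ∫ u in (-π)..π, poissonKernelRT r (θ - u) * Real.log (ginv (φ u) s))) :
    ∀ s ∈ Set.Ioo (0 : ℝ) t', ginv (youngConj φz) s ≤ 2 * Real.exp ((1 / (2 * π)) *
      ∫ u in (-π)..π, poissonKernelRT r (θ - u) * Real.log (ginv (youngConj (φ u)) s)) := by
  intro s hs
  obtain ⟨hs0, hst⟩ := hs
  have hπ := Real.pi_pos
  set IA := ∫ u in (-π)..π, poissonKernelRT r (θ - u) * Real.log (ginv (φ u) s) with hIA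
  set IB := ∫ u in (-π)..π, poissonKernelRT r (θ - u) * Real.log (ginv (youngConj (φ u)) s)
    with hIB
  -- pointwise positivity and lower duality bound for each w
  have hA : ∀ w : ℝ, 0 < ginv (φ w) s := fun w => (S10.nf_ginv (hN w) hs0).1
  have hB : ∀ w : ℝ, 0 < ginv (youngConj (φ w)) s := fun w => (S10.conj_ginv (hN w) hs0).1
  have hAB : ∀ w : ℝ, s ≤ ginv (φ w) s * ginv (youngConj (φ w)) s :=
    fun w => S10.lower_bound (hN w) hs0
  -- continuity of the kernel in u
  have hcontP : Continuous fun u : ℝ => poissonKernelRT r (θ - u) :=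
    S10.poisson_cont hr0 hr1 θ
  have hcontP' : ContinuousOn (fun u : ℝ => poissonKernelRT r (θ - u)) (Set.uIcc (-π) π) :=
    hcontP.continuousOn
  -- integrabilities
  have hI1 : IntervalIntegrable
      (fun u => poissonKernelRT r (θ - u) * Real.log (ginv (youngConj (φ u)) s))
      volume (-π) π := by
    have := (hint' s ⟨hs0, hst⟩).continuousOn_mul hcontP'
    exact this
  have hIlogA : IntervalIntegrable
      (fun u => poissonKernelRT r (θ - u) * Real.log (ginv (φ u) s)) volume (-π) π := by
    have := (hint s ⟨hs0, hst⟩).continuousOn_mul hcontP'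
    exact this
  have hIconst : IntervalIntegrable
      (fun u => poissonKernelRT r (θ - u) * Real.log s) volume (-π) π :=
    (hcontP.mul continuous_const).intervalIntegrable _ _
  have hI2 : IntervalIntegrable
      (fun u => poissonKernelRT r (θ - u) * (Real.log s - Real.log (ginv (φ u) s)))
      volume (-π) π := by
    have h := hIconst.sub hIlogA
    have : (fun u => poissonKernelRT r (θ - u) * Real.log s
        - poissonKernelRT r (θ - u) * Real.log (ginv (φ u) s))
        = fun u => poissonKernelRT r (θ - u) * (Real.log s - Real.log (ginv (φ u) s)) := by
      funext u; ring
    rwa [this] at h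
  -- pointwise inequality
  have hpt : ∀ u ∈ Set.Icc (-π) π,
      poissonKernelRT r (θ - u) * (Real.log s - Real.log (ginv (φ u) s)) ≤
        poissonKernelRT r (θ - u) * Real.log (ginv (youngConj (φ u)) s) := by
    intro u _
    apply mul_le_mul_of_nonneg_left _ (S10.poisson_nonneg hr0 hr1 _)
    have hlog : Real.log s ≤ Real.log (ginv (φ u) s) + Real.log (ginv (youngConj (φ u)) s) := by
      rw [← Real.log_mul (hA u).ne' (hB u).ne']
      exact Real.log_le_log hs0 (hAB u)
    linarith
  have hmono := intervalIntegral.integral_mono_on (by linarith : -π ≤ π) hI2 hI1 hpt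
  -- split the left integral
  have hsplit : (∫ u in (-π)..π,
        poissonKernelRT r (θ - u) * (Real.log s - Real.log (ginv (φ u) s)))
      = 2 * π * Real.log s - IA := by
    have h1 : (∫ u in (-π)..π,
          poissonKernelRT r (θ - u) * (Real.log s - Real.log (ginv (φ u) s)))
        = (∫ u in (-π)..π, poissonKernelRT r (θ - u) * Real.log s)
          - ∫ u in (-π)..π, poissonKernelRT r (θ - u) * Real.log (ginv (φ u) s) := by
      rw [← intervalIntegral.integral_sub hIconst hIlogA]
      congr 1; funext u; ring
    rw [h1, intervalIntegral.integral_mul_const, S10.integral_poisson hr0 hr1 θ]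
  rw [hsplit] at hmono
  -- duality bound for φz
  obtain ⟨haz, hφa, _⟩ := S10.nf_ginv hφz hs0
  obtain ⟨hbz, hconjb⟩ := S10.conj_ginv hφz hs0
  have hyoung : ginv φz s * ginv (youngConj φz) s - φz (ginv φz s) ≤
      youngConj φz (ginv (youngConj φz) s) := S10.le_conj hφz haz _
  have h2s : ginv φz s * ginv (youngConj φz) s ≤ 2 * s := by linarith
  have hble : ginv (youngConj φz) s ≤ 2 * s / ginv φz s := by
    rw [le_div_iff₀ haz]; nlinarith
  have ha_eq := hinv s ⟨hs0, hst⟩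
  have hfin : 2 * s / ginv φz s = 2 * Real.exp (Real.log s - 1 / (2 * π) * IA) := by
    rw [ha_eq, Real.exp_sub, Real.exp_log hs0]
    ring
  have hexp : Real.log s - 1 / (2 * π) * IA ≤ 1 / (2 * π) * IB := by
    have h2π : (0:ℝ) < 2 * π := by linarith
    rw [← sub_nonneg]
    have heq : 1 / (2 * π) * IB - (Real.log s - 1 / (2 * π) * IA)
        = (IB - (2 * π * Real.log s - IA)) / (2 * π) := by
      field_simp
    rw [heq]
    apply div_nonneg (by linarith) h2π.le
  calc ginv (youngConj φz) s ≤ 2 * s / ginv φz s := hble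
    _ = 2 * Real.exp (Real.log s - 1 / (2 * π) * IA) := hfin
    _ ≤ 2 * Real.exp (1 / (2 * π) * IB) := by
        have := Real.exp_le_exp.mpr hexp
        linarith
end
end

section
/- Let ψ¹(t) = t(log t)² and ψ²(s) = e^{−1+√(1−s)}(s − (1 − √(1−s))²) for 0 ≤ s < 1. Then there exists δ ∈ (0,1) such that for all t ∈ (1−δ, 1): ψ²((log t)²/5) < t (log t)², i.e. ψ²(ψ¹(t)/(5t)) − ψ¹(t) < 0. -/
open Real

noncomputable section

/-- `ψ¹(t) = t (log t)²`. -/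
def psi1 (t : ℝ) : ℝ := t * Real.log t ^ 2

/-- `ψ²(s) = e^{-1+√(1-s)} (s - (1-√(1-s))²)`, the Young conjugate of `ψ¹` for
`0 ≤ s < 1`. -/
def psi2 (s : ℝ) : ℝ :=
  Real.exp (-1 + Real.sqrt (1 - s)) * (s - (1 - Real.sqrt (1 - s)) ^ 2)

lemma psi2_le_self {s : ℝ} (hs : 0 ≤ s) : psi2 s ≤ s := by
  unfold psi2
  have hE1 : Real.exp (-1 + Real.sqrt (1 - s)) ≤ 1 := by
    rw [Real.exp_le_one_iff]
    have : Real.sqrt (1 - s) ≤ 1 := Real.sqrt_le_one.mpr (by linarith)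
    linarith
  have hE0 : 0 < Real.exp (-1 + Real.sqrt (1 - s)) := Real.exp_pos _
  set A := s - (1 - Real.sqrt (1 - s)) ^ 2 with hA
  have hAs : A ≤ s := by
    have : (1 - Real.sqrt (1 - s)) ^ 2 ≥ 0 := sq_nonneg _
    linarith
  rcases le_or_gt 0 A with h | h
  · calc Real.exp (-1 + Real.sqrt (1 - s)) * A ≤ 1 * A := by
          exact mul_le_mul_of_nonneg_right hE1 h
      _ = A := one_mul _
      _ ≤ s := hAs
  · have : Real.exp (-1 + Real.sqrt (1 - s)) * A < 0 :=
      mul_neg_of_pos_of_neg hE0 h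
    linarith

/-- For `t < 1` close enough to `1`, `ψ²((log t)²/5) < t (log t)²`, i.e.
`ψ²(ψ¹(t)/(5t)) - ψ¹(t) < 0`. -/
theorem statement14 : ∃ δ : ℝ, 0 < δ ∧ δ < 1 ∧ ∀ t : ℝ, 1 - δ < t → t < 1 →
    psi2 (Real.log t ^ 2 / 5) < t * Real.log t ^ 2 ∧
    psi2 (psi1 t / (5 * t)) - psi1 t < 0 := by
  refine ⟨1/2, by norm_num, by norm_num, fun t ht1 ht2 => ?_⟩
  have ht0 : (0:ℝ) < t := by linarith
  have hlog : Real.log t < 0 := Real.log_neg ht0 ht2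
  have hsq : 0 < Real.log t ^ 2 := by nlinarith
  have hs : (0:ℝ) ≤ Real.log t ^ 2 / 5 := by positivity
  have key : psi2 (Real.log t ^ 2 / 5) < t * Real.log t ^ 2 := by
    have h1 := psi2_le_self hs
    have h2 : Real.log t ^ 2 / 5 < t * Real.log t ^ 2 := by
      rw [div_lt_iff₀ (by norm_num : (0:ℝ) < 5)] at *
      nlinarith
    linarith
  refine ⟨key, ?_⟩
  have heq : psi1 t / (5 * t) = Real.log t ^ 2 / 5 := by
    unfold psi1
    field_simp
  rw [heq]
  unfold psi1
  linarith
end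
end
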